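/- arXiv:1906.04118 — 4 statements merged into one kernel-verified Lean document; each statement's English description precedes it below -/
import Mathlib

section
/- Let K and L be convex bodies in ℝ^n such that K ∪ L is convex. Then (K ∪ L) + (K ∩ L) = K + L, where + denotes the Minkowski sum of sets. -/
open MeasureTheory Filter Topology Metric Set
open scoped InnerProductSpace ENNReal NNReal Pointwise

noncomputable section

/-- Euclidean space `ℝ^n`. -/
abbrev Eucl (n : ℕ) : Type := EuclideanSpace ℝ (Fin n)

/-- The support function of a subset of `ℝ^n`. -/
def suppFn {n : ℕ} (K : Set (Eucl n)) (x : Eucl n) : ℝ :=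
  sSup ((fun y => ⟪x, y⟫_ℝ) '' K)

/-- A convex body: a nonempty compact convex subset of `ℝ^n`. -/
def IsConvexBody {n : ℕ} (K : Set (Eucl n)) : Prop :=
  K.Nonempty ∧ IsCompact K ∧ Convex ℝ K

/-- For convex bodies `K, L ⊆ ℝ^n` with `K ∪ L` convex, the Minkowski sum
satisfies `(K ∪ L) + (K ∩ L) = K + L`. -/
theorem minkowski_sum_of_union_and_intersection (n : ℕ) (K L : Set (Eucl n))
    (hK : IsConvexBody K) (hL : IsConvexBody L) (hUnion : Convex ℝ (K ∪ L)) :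
    (K ∪ L) + (K ∩ L) = K + L := by
  obtain ⟨hKne, hKc, hKconv⟩ := hK
  obtain ⟨hLne, hLc, hLconv⟩ := hL
  apply Set.Subset.antisymm
  · intro a ha
    rw [Set.mem_add] at ha ⊢
    obtain ⟨x, hx, y, hy, rfl⟩ := ha
    rcases hx with hx | hx
    · exact ⟨x, hx, y, hy.2, rfl⟩
    · exact ⟨y, hy.1, x, hx, add_comm y x⟩
  · intro a ha
    rw [Set.mem_add] at ha ⊢
    obtain ⟨k, hk, l, hl, rfl⟩ := ha
    set p : ℝ → Eucl n := fun t => (1 - t) • k + t • l with hp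
    have hseg : ∀ t ∈ Icc (0:ℝ) 1, p t ∈ K ∪ L := by
      intro t ht
      exact hUnion (mem_union_left _ hk) (mem_union_right _ hl)
        (by linarith [ht.2]) ht.1 (by ring)
    set S := {t ∈ Icc (0:ℝ) 1 | p t ∈ K} with hS
    have h0 : (0:ℝ) ∈ S := ⟨⟨le_refl 0, zero_le_one⟩, by simp [hp, hk]⟩
    have hSbdd : BddAbove S := ⟨1, fun t ht => ht.1.2⟩
    set t₀ := sSup S with ht₀
    have ht₀mem : t₀ ∈ Icc (0:ℝ) 1 :=
      ⟨le_csSup hSbdd h0, csSup_le ⟨0, h0⟩ fun t ht => ht.1.2⟩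
    have hpc : Continuous p := by
      apply Continuous.add <;> exact (by continuity : Continuous fun t : ℝ => t).smul continuous_const |>.comp (by continuity)
    have ht₀K : p t₀ ∈ K := by
      have h1 : t₀ ∈ closure S := csSup_mem_closure ⟨0, h0⟩ hSbdd
      have h2 : p t₀ ∈ closure K :=
        map_mem_closure hpc h1 fun t ht => ht.2
      rwa [hKc.isClosed.closure_eq] at h2
    have ht₀L : p t₀ ∈ L := by
      rcases eq_or_lt_of_le ht₀mem.2 with h1 | h1
      · have : p t₀ = l := by rw [h1]; simp [hp]
        rwa [this]
      · have hmem : ∀ t ∈ Ioc t₀ 1, p t ∈ L := by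
          intro t ht
          have htI : t ∈ Icc (0:ℝ) 1 := ⟨le_trans ht₀mem.1 ht.1.le, ht.2⟩
          rcases hseg t htI with h | h
          · exact absurd (le_csSup hSbdd ⟨htI, h⟩) (not_le.mpr ht.1)
          · exact h
        have hcl : t₀ ∈ closure (Ioc t₀ 1) := by
          rw [closure_Ioc (ne_of_lt h1)]
          exact ⟨le_refl _, h1.le⟩
        have h2 : p t₀ ∈ closure L := map_mem_closure hpc hcl hmem
        rwa [hLc.isClosed.closure_eq] at h2
    refine ⟨p (1 - t₀), hseg _ ⟨by linarith [ht₀mem.2], by linarith [ht₀mem.1]⟩,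
      p t₀, ⟨ht₀K, ht₀L⟩, ?_⟩
    simp only [hp]
    module
end
end

section
/- Let f : ℝ^n → ℝ be a piecewise linear function. Then there exist m ∈ ℕ and convex bodies K₁, …, K_m in ℝ^n such that f(x) = min_{1 ≤ i ≤ m} h_{K_i}(x) for every x ∈ ℝ^n, i.e. f is the pointwise minimum of finitely many support functions. -/
open MeasureTheory Filter Topology Metric Set
open scoped InnerProductSpace ENNReal NNReal Pointwise

noncomputable section

/-- A piecewise linear function on `ℝ^n`: a continuous function which is linear
on each cone of a finite family of closed convex cones with vertex at the
origin, pairwise disjoint interiors, and union all of `ℝ^n`. -/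
def IsPiecewiseLinear {n : ℕ} (f : Eucl n → ℝ) : Prop :=
  Continuous f ∧ ∃ (m : ℕ) (C : Fin m → Set (Eucl n)) (L : Fin m → (Eucl n →ₗ[ℝ] ℝ)),
    (∀ i, IsClosed (C i)) ∧ (∀ i, Convex ℝ (C i)) ∧
    (∀ i, ∀ t : ℝ, 0 ≤ t → ∀ x ∈ C i, t • x ∈ C i) ∧
    (Pairwise fun i j => interior (C i) ∩ interior (C j) = ∅) ∧
    (⋃ i, C i) = Set.univ ∧
    (∀ i, ∀ x ∈ C i, f x = L i x)

namespace PLAux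

/-- Lower bound for `infDist` from a pointwise lower bound. -/
lemma le_infDist' {α : Type*} [MetricSpace α] {s : Set α} (hs : s.Nonempty) {x : α} {b : ℝ}
    (h : ∀ y ∈ s, b ≤ dist x y) : b ≤ Metric.infDist x s := by
  by_contra hb
  obtain ⟨y, hy, hd⟩ := (Metric.infDist_lt_iff hs).1 (not_le.1 hb)
  exact absurd (h y hy) (not_le.2 hd)

/-- A continuous function which is linear on each set of a finite closed cover
is globally Lipschitz. -/
lemma f_lip {n m : ℕ} (C : Fin m → Set (Eucl n)) (Lc : Fin m → (Eucl n →L[ℝ] ℝ))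
    (f : Eucl n → ℝ) (hf : Continuous f)
    (hCcl : ∀ i, IsClosed (C i)) (hCun : (⋃ i, C i) = Set.univ)
    (hfL : ∀ i, ∀ x ∈ C i, f x = Lc i x)
    (M : ℝ) (hM : ∀ i, ‖Lc i‖ ≤ M) :
    ∀ x y : Eucl n, f y - f x ≤ M * ‖y - x‖ := by
  intro x y
  set c : ℝ := M * ‖y - x‖ with hc
  set z : ℝ → Eucl n := fun t => x + t • (y - x) with hzdef
  have hzc : Continuous z := by
    exact continuous_const.add (continuous_id.smul continuous_const)
  have hmem : ∀ w : Eucl n, ∃ i, w ∈ C i := by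
    intro w
    have : w ∈ ⋃ i, C i := hCun ▸ Set.mem_univ w
    exact Set.mem_iUnion.1 this
  have hznorm : ∀ s t : ℝ, ‖z t - z s‖ = |t - s| * ‖y - x‖ := by
    intro s t
    have : z t - z s = (t - s) • (y - x) := by
      show (x + t • (y - x)) - (x + s • (y - x)) = (t - s) • (y - x)
      rw [sub_smul]; abel
    rw [this, norm_smul, Real.norm_eq_abs]
  have hdiff : ∀ (i : Fin m) (s t : ℝ), z s ∈ C i → z t ∈ C i → s ≤ t →
      f (z t) - f (z s) ≤ M * ((t - s) * ‖y - x‖) := by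
    intro i s t hs ht hst
    rw [hfL i _ ht, hfL i _ hs]
    have h1 : (Lc i) (z t) - (Lc i) (z s) = (Lc i) (z t - z s) := by rw [map_sub]
    have h2 : (Lc i) (z t - z s) ≤ ‖Lc i‖ * ‖z t - z s‖ := by
      calc (Lc i) (z t - z s) ≤ ‖(Lc i) (z t - z s)‖ := le_abs_self _
        _ ≤ ‖Lc i‖ * ‖z t - z s‖ := (Lc i).le_opNorm _
    have h3 : ‖z t - z s‖ = (t - s) * ‖y - x‖ := by
      rw [hznorm s t, abs_of_nonneg (by linarith)]
    have h4 : ‖Lc i‖ * ‖z t - z s‖ ≤ M * ((t - s) * ‖y - x‖) := by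
      rw [h3]
      exact mul_le_mul_of_nonneg_right (hM i) (mul_nonneg (by linarith) (norm_nonneg _))
    linarith
  set A : Set ℝ := Set.Icc (0:ℝ) 1 ∩ {t | f (z t) - f x ≤ t * c} with hA
  have hz0 : z 0 = x := by simp [hzdef]
  have hz1 : z 1 = y := by simp [hzdef]
  have hA0 : (0:ℝ) ∈ A := by
    constructor
    · exact ⟨le_refl 0, zero_le_one⟩
    · simp [hz0]
  have hAbdd : BddAbove A := (BddAbove.mono Set.inter_subset_left) bddAbove_Icc
  have hAcl : IsClosed A := by
    apply isClosed_Icc.inter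
    exact isClosed_le (by fun_prop) (by fun_prop)
  set s : ℝ := sSup A with hsdef
  have hsA : s ∈ A := hAcl.csSup_mem ⟨0, hA0⟩ hAbdd
  have hs1 : s = 1 := by
    by_contra hne
    have hs_lt : s < 1 := lt_of_le_of_ne hsA.1.2 hne
    have hs0 : 0 ≤ s := hsA.1.1
    set tk : ℕ → ℝ := fun k => s + (1 - s)/(k+1) with htk
    have hkpos : ∀ k : ℕ, (0:ℝ) < (k:ℝ) + 1 := fun k => by positivity
    have htk_gt : ∀ k, s < tk k := by
      intro k
      have : (0:ℝ) < (1 - s)/(k+1) := by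
        apply div_pos (by linarith) (hkpos k)
      simp only [htk]; linarith
    have htk_le : ∀ k, tk k ≤ 1 := by
      intro k
      have h1 : (1 - s)/(k+1) ≤ (1 - s)/1 := by
        apply div_le_div_of_nonneg_left (by linarith) one_pos
        have := hkpos k
        linarith [Nat.cast_nonneg (α := ℝ) k]
      simp only [htk]
      rw [div_one] at h1
      linarith
    have htk_mem : ∀ k, tk k ∈ Set.Icc (0:ℝ) 1 := fun k => ⟨by linarith [htk_gt k], htk_le k⟩
    choose j hj using fun k => hmem (z (tk k))
    obtain ⟨i0, hi0⟩ := Finite.exists_infinite_fiber j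
    have hS : (j ⁻¹' {i0} : Set ℕ).Infinite := Set.infinite_coe_iff.1 hi0
    have hzs : z s ∈ C i0 := by
      have hcl : z s ∈ closure (C i0) := by
        rw [Metric.mem_closure_iff]
        intro ε hε
        obtain ⟨k, hkS, hk⟩ := hS.exists_gt ⌈(1 - s) * ‖y - x‖ / ε⌉₊
        rw [Set.mem_preimage, Set.mem_singleton_iff] at hkS
        have hmemk : z (tk k) ∈ C i0 := hkS ▸ hj k
        refine ⟨z (tk k), hmemk, ?_⟩
        rw [dist_eq_norm, ← norm_neg, neg_sub, hznorm s (tk k)]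
        have h1 : tk k - s = (1 - s)/(k+1) := by simp [htk]
        rw [h1, abs_of_nonneg (le_of_lt (div_pos (by linarith) (hkpos k)))]
        have h2 : (1 - s) * ‖y - x‖ / ε < (k:ℝ) + 1 := by
          calc (1 - s) * ‖y - x‖ / ε ≤ (⌈(1 - s) * ‖y - x‖ / ε⌉₊ : ℝ) := Nat.le_ceil _
            _ < (k:ℝ) := by exact_mod_cast Nat.cast_lt.2 hk
            _ < (k:ℝ) + 1 := by linarith
        rw [div_mul_eq_mul_div, div_lt_iff₀ (hkpos k)]
        rw [div_lt_iff₀ hε] at h2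
        linarith [mul_comm ε ((k:ℝ)+1)]
      rwa [(hCcl i0).closure_eq] at hcl
    obtain ⟨k0, hk0⟩ := hS.nonempty
    have hjk0 : j k0 = i0 := by rwa [Set.mem_preimage, Set.mem_singleton_iff] at hk0
    have hztk0 : z (tk k0) ∈ C i0 := hjk0 ▸ hj k0
    have h1 : f (z (tk k0)) - f (z s) ≤ M * ((tk k0 - s) * ‖y - x‖) :=
      hdiff i0 s (tk k0) hzs hztk0 (le_of_lt (htk_gt k0))
    have h2 : tk k0 ∈ A := by
      refine ⟨htk_mem k0, ?_⟩
      have h3 : f (z s) - f x ≤ s * c := hsA.2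
      show f (z (tk k0)) - f x ≤ tk k0 * c
      have : M * ((tk k0 - s) * ‖y - x‖) + s * c = tk k0 * c := by rw [hc]; ring
      linarith
    exact absurd (le_csSup hAbdd h2) (not_le.2 (htk_gt k0))
  have h := hsA.2
  rw [hs1] at h
  simp only [Set.mem_setOf_eq, hz1, one_mul] at h
  exact h

/-- A sublinear function dominated by `R * ‖·‖` is the support function of a
convex body. -/
lemma sublinear_body {n : ℕ} (g : Eucl n → ℝ)
    (ghom : ∀ c : ℝ, 0 < c → ∀ x, g (c • x) = c * g x)
    (gadd : ∀ x y, g (x + y) ≤ g x + g y)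
    (R : ℝ) (hR : ∀ x, g x ≤ R * ‖x‖) :
    ∃ K : Set (Eucl n), IsConvexBody K ∧ ∀ x, suppFn K x = g x := by
  have g0 : g 0 = 0 := by
    have h2 := ghom 2 (by norm_num) 0
    rw [smul_zero] at h2; linarith
  set K : Set (Eucl n) := {y | ∀ x, ⟪x, y⟫_ℝ ≤ g x} with hK
  -- Hahn-Banach: a supporting point for each nonzero direction
  have hcore : ∀ x₀ : Eucl n, x₀ ≠ 0 → ∃ y ∈ K, ⟪x₀, y⟫_ℝ = g x₀ := by
    intro x₀ hx₀
    set pf : Eucl n →ₗ.[ℝ] ℝ := LinearPMap.mkSpanSingleton (K := ℝ) x₀ (g x₀) hx₀ with hpfdef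
    have hpf : ∀ zz : pf.domain, pf zz ≤ g zz := by
      rintro ⟨zz, hzz⟩
      obtain ⟨t, rfl⟩ := Submodule.mem_span_singleton.1 hzz
      have happ : pf ⟨t • x₀, hzz⟩ = t • (g x₀) :=
        LinearPMap.mkSpanSingleton'_apply _ _ _ t _
      rw [happ, smul_eq_mul]
      rcases lt_trichotomy t 0 with htn | rfl | htp
      · have hsum := gadd (t • x₀) ((-t) • x₀)
        have hzero : t • x₀ + (-t) • x₀ = 0 := by rw [← add_smul]; simp
        rw [hzero, g0] at hsum
        have hg : g ((-t) • x₀) = (-t) * g x₀ := ghom (-t) (by linarith) x₀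
        rw [hg] at hsum
        linarith
      · simp [g0]
      · rw [ghom t htp x₀]
    obtain ⟨ℓ, hext, hle⟩ := exists_extension_of_le_sublinear pf g ghom gadd hpf
    set ℓc := LinearMap.toContinuousLinearMap ℓ with hlc
    set y : Eucl n := (InnerProductSpace.toDual ℝ (Eucl n)).symm ℓc with hy
    have hyx : ∀ x, ⟪x, y⟫_ℝ = ℓ x := by
      intro x
      rw [real_inner_comm]
      have h := InnerProductSpace.toDual_symm_apply (𝕜 := ℝ) (E := Eucl n) (y := ℓc) (x := x)
      rw [hy]
      rw [h, hlc, LinearMap.coe_toContinuousLinearMap']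
    have hx₀mem : x₀ ∈ pf.domain := Submodule.mem_span_singleton_self x₀
    refine ⟨y, fun x => by rw [hyx]; exact hle x, ?_⟩
    rw [hyx]
    have h1 := hext ⟨x₀, hx₀mem⟩
    have h2 : pf ⟨x₀, hx₀mem⟩ = g x₀ := LinearPMap.mkSpanSingleton_apply ℝ ℝ hx₀ (g x₀)
    rw [h1, h2]
  have hKne : K.Nonempty := by
    by_cases hn : ∃ x : Eucl n, x ≠ 0
    · obtain ⟨x₀, hx₀⟩ := hn
      obtain ⟨y, hy, -⟩ := hcore x₀ hx₀
      exact ⟨y, hy⟩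
    · push_neg at hn
      refine ⟨0, fun x => ?_⟩
      rw [hn x, inner_zero_left, g0]
  have hHB : ∀ x₀ : Eucl n, ∃ y ∈ K, ⟪x₀, y⟫_ℝ = g x₀ := by
    intro x₀
    by_cases hx₀ : x₀ = 0
    · obtain ⟨y, hy⟩ := hKne
      exact ⟨y, hy, by rw [hx₀, inner_zero_left, g0]⟩
    · exact hcore x₀ hx₀
  have hKconv : Convex ℝ K := by
    intro y1 h1 y2 h2 a b ha hb hab
    intro x
    have e1 : ⟪x, a • y1 + b • y2⟫_ℝ = a * ⟪x, y1⟫_ℝ + b * ⟪x, y2⟫_ℝ := by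
      rw [inner_add_right, real_inner_smul_right, real_inner_smul_right]
    rw [e1]
    calc a * ⟪x, y1⟫_ℝ + b * ⟪x, y2⟫_ℝ ≤ a * g x + b * g x := by
          apply add_le_add
          · exact mul_le_mul_of_nonneg_left (h1 x) ha
          · exact mul_le_mul_of_nonneg_left (h2 x) hb
      _ = g x := by rw [← add_mul, hab, one_mul]
  have hKcl : IsClosed K := by
    have : K = ⋂ x : Eucl n, {y : Eucl n | ⟪x, y⟫_ℝ ≤ g x} := by
      ext y; simp [hK, Set.mem_iInter]
    rw [this]
    exact isClosed_iInter fun x =>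
      isClosed_le (continuous_const.inner continuous_id) continuous_const
  have hKsub : K ⊆ Metric.closedBall 0 |R| := by
    intro y hy
    rw [Metric.mem_closedBall, dist_zero_right]
    have h1 : ⟪y, y⟫_ℝ ≤ g y := hy y
    rw [real_inner_self_eq_norm_mul_norm] at h1
    have h2 := hR y
    rcases eq_or_lt_of_le (norm_nonneg y) with h0 | h0
    · rw [← h0]; exact abs_nonneg R
    · have : ‖y‖ ≤ R := by
        have := h1.trans h2
        exact le_of_mul_le_mul_right (by linarith [mul_comm ‖y‖ ‖y‖, mul_comm R ‖y‖]) h0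
      exact this.trans (le_abs_self R)
  have hKcp : IsCompact K :=
    IsCompact.of_isClosed_subset (isCompact_closedBall 0 |R|) hKcl hKsub
  refine ⟨K, ⟨hKne, hKcp, hKconv⟩, fun x => ?_⟩
  have himg : ((fun y => ⟪x, y⟫_ℝ) '' K).Nonempty := hKne.image _
  have hub : ∀ r ∈ (fun y => ⟪x, y⟫_ℝ) '' K, r ≤ g x := by
    rintro r ⟨y, hy, rfl⟩
    exact hy x
  apply le_antisymm
  · exact csSup_le himg hub
  · obtain ⟨y, hy, hxy⟩ := hHB x
    rw [← hxy]
    exact le_csSup ⟨g x, hub⟩ ⟨y, hy, rfl⟩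

end PLAux

/-- Every piecewise linear function on `ℝ^n` is a pointwise minimum of finitely
many support functions of convex bodies. -/
theorem piecewise_linear_is_min_of_support_functions (n : ℕ) (f : Eucl n → ℝ)
    (hf : IsPiecewiseLinear f) :
    ∃ (m : ℕ) (K : Fin (m + 1) → Set (Eucl n)),
      (∀ i, IsConvexBody (K i)) ∧
      ∀ x : Eucl n, f x = ⨅ i, suppFn (K i) x := by
  obtain ⟨hfc, m, C, L, hCcl, hCconv, hCcone, -, hCun, hfL⟩ := hf
  have hmem : ∀ w : Eucl n, ∃ i, w ∈ C i := by
    intro w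
    have : w ∈ ⋃ i, C i := hCun ▸ Set.mem_univ w
    exact Set.mem_iUnion.1 this
  rcases m with _ | m'
  · exfalso
    obtain ⟨i, -⟩ := hmem 0
    exact i.elim0
  set Lc : Fin (m' + 1) → (Eucl n →L[ℝ] ℝ) :=
    fun i => LinearMap.toContinuousLinearMap (L i) with hLc
  have hfLc : ∀ i, ∀ x ∈ C i, f x = Lc i x := by
    intro i x hx
    rw [hfL i x hx, hLc]
    rw [LinearMap.coe_toContinuousLinearMap']
  set M : ℝ := 1 + ∑ i, ‖Lc i‖ with hM
  have hMi : ∀ i, ‖Lc i‖ ≤ M := by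
    intro i
    have h1 : ‖Lc i‖ ≤ ∑ j, ‖Lc j‖ :=
      Finset.single_le_sum (fun j _ => norm_nonneg (Lc j)) (Finset.mem_univ i)
    rw [hM]; linarith
  have hM0 : 0 < M := by
    have : (0:ℝ) ≤ ∑ j, ‖Lc j‖ := Finset.sum_nonneg fun j _ => norm_nonneg (Lc j)
    rw [hM]; linarith
  have hlip := PLAux.f_lip C Lc f hfc hCcl hCun hfLc M hMi
  have hf0 : f 0 = 0 := by
    obtain ⟨i, hi⟩ := hmem 0
    rw [hfLc i 0 hi, map_zero]
  set D : Fin (m' + 1) → Set (Eucl n) := fun i => insert 0 (C i) with hD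
  have hD0 : ∀ i, (0 : Eucl n) ∈ D i := fun i => Set.mem_insert _ _
  have hDne : ∀ i, (D i).Nonempty := fun i => ⟨0, hD0 i⟩
  have hDadd : ∀ i, ∀ p ∈ D i, ∀ q ∈ D i, p + q ∈ D i := by
    intro i p hp q hq
    rcases hp with rfl | hp
    · rwa [zero_add]
    rcases hq with rfl | hq
    · rw [add_zero]; exact Set.mem_insert_of_mem _ hp
    have hmid : (1/2 : ℝ) • p + (1/2 : ℝ) • q ∈ C i :=
      hCconv i hp hq (by norm_num) (by norm_num) (by norm_num)
    have h2 : (2:ℝ) • ((1/2 : ℝ) • p + (1/2 : ℝ) • q) ∈ C i :=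
      hCcone i 2 (by norm_num) _ hmid
    have : (2:ℝ) • ((1/2 : ℝ) • p + (1/2 : ℝ) • q) = p + q := by
      rw [smul_add, smul_smul, smul_smul]; norm_num
    rw [this] at h2
    exact Set.mem_insert_of_mem _ h2
  have hDsmul : ∀ i, ∀ c : ℝ, 0 ≤ c → ∀ p ∈ D i, c • p ∈ D i := by
    intro i c hc p hp
    rcases hp with rfl | hp
    · rw [smul_zero]; exact hD0 i
    · exact Set.mem_insert_of_mem _ (hCcone i c hc p hp)
  have hfpD : ∀ i, ∀ p ∈ D i, f p = Lc i p := by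
    intro i p hp
    rcases hp with rfl | hp
    · rw [hf0, map_zero]
    · exact hfLc i p hp
  set dI : Fin (m' + 1) → Eucl n → ℝ := fun i x => Metric.infDist x (D i) with hdI
  have hdsmul_le : ∀ i (c : ℝ), 0 < c → ∀ x, dI i (c • x) ≤ c * dI i x := by
    intro i c hc x
    have h1 : dI i (c • x) / c ≤ dI i x := by
      apply PLAux.le_infDist' (hDne i)
      intro p hp
      rw [div_le_iff₀ hc]
      have h2 : Metric.infDist (c • x) (D i) ≤ dist (c • x) (c • p) :=
        Metric.infDist_le_dist_of_mem (hDsmul i c hc.le p hp)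
      rw [dist_smul₀, Real.norm_eq_abs, abs_of_pos hc] at h2
      calc dI i (c • x) ≤ c * dist x p := h2
        _ = dist x p * c := mul_comm _ _
    rw [div_le_iff₀ hc] at h1
    linarith [mul_comm (dI i x) c]
  have hdsmul : ∀ i (c : ℝ), 0 < c → ∀ x, dI i (c • x) = c * dI i x := by
    intro i c hc x
    apply le_antisymm (hdsmul_le i c hc x)
    have h2 := hdsmul_le i c⁻¹ (inv_pos.2 hc) (c • x)
    rw [smul_smul, inv_mul_cancel₀ (ne_of_gt hc), one_smul] at h2
    have hc' : 0 < c⁻¹ := inv_pos.2 hc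
    calc c * dI i x ≤ c * (c⁻¹ * dI i (c • x)) := by
          apply mul_le_mul_of_nonneg_left h2 hc.le
      _ = dI i (c • x) := by field_simp
  have hdadd : ∀ i x y, dI i (x + y) ≤ dI i x + dI i y := by
    intro i x y
    have h1 : dI i (x + y) - dI i y ≤ dI i x := by
      apply PLAux.le_infDist' (hDne i)
      intro p hp
      have h2 : dI i (x + y) - dist x p ≤ dI i y := by
        apply PLAux.le_infDist' (hDne i)
        intro q hq
        have h3 : Metric.infDist (x + y) (D i) ≤ dist (x + y) (p + q) :=
          Metric.infDist_le_dist_of_mem (hDadd i p hp q hq)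
        have h4 : dist (x + y) (p + q) ≤ dist x p + dist y q := dist_add_add_le x y p q
        have : dI i (x + y) ≤ dist x p + dist y q := le_trans h3 h4
        linarith
      linarith
    linarith
  set g : Fin (m' + 1) → Eucl n → ℝ := fun i x => Lc i x + 2 * M * dI i x with hg
  have hghom : ∀ i, ∀ c : ℝ, 0 < c → ∀ x, g i (c • x) = c * g i x := by
    intro i c hc x
    simp only [hg]
    rw [(Lc i).map_smul, hdsmul i c hc x, smul_eq_mul]
    ring
  have hgadd : ∀ i, ∀ x y, g i (x + y) ≤ g i x + g i y := by
    intro i x y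
    simp only [hg]
    rw [map_add]
    have h1 := hdadd i x y
    have h2 : 2 * M * dI i (x + y) ≤ 2 * M * (dI i x + dI i y) :=
      mul_le_mul_of_nonneg_left h1 (by linarith)
    linarith
  have hgR : ∀ i, ∀ x, g i x ≤ (3 * M) * ‖x‖ := by
    intro i x
    simp only [hg]
    have h1 : Lc i x ≤ M * ‖x‖ := by
      calc Lc i x ≤ ‖Lc i x‖ := le_abs_self _
        _ ≤ ‖Lc i‖ * ‖x‖ := (Lc i).le_opNorm x
        _ ≤ M * ‖x‖ := mul_le_mul_of_nonneg_right (hMi i) (norm_nonneg x)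
    have h2 : dI i x ≤ ‖x‖ := by
      have := Metric.infDist_le_dist_of_mem (x := x) (hD0 i)
      rwa [dist_zero_right] at this
    have h3 : 2 * M * dI i x ≤ 2 * M * ‖x‖ := mul_le_mul_of_nonneg_left h2 (by linarith)
    linarith
  have hgf : ∀ i x, f x ≤ g i x := by
    intro i x
    have h1 : (f x - Lc i x) / (2 * M) ≤ dI i x := by
      apply PLAux.le_infDist' (hDne i)
      intro p hp
      rw [div_le_iff₀ (by linarith)]
      have h2 : f x - f p ≤ M * ‖x - p‖ := hlip p x
      have h3 : f p = Lc i p := hfpD i p hp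
      have h4 : Lc i p - Lc i x ≤ M * ‖x - p‖ := by
        calc Lc i p - Lc i x = Lc i (p - x) := by rw [map_sub]
          _ ≤ ‖Lc i (p - x)‖ := le_abs_self _
          _ ≤ ‖Lc i‖ * ‖p - x‖ := (Lc i).le_opNorm _
          _ ≤ M * ‖p - x‖ := mul_le_mul_of_nonneg_right (hMi i) (norm_nonneg _)
          _ = M * ‖x - p‖ := by rw [norm_sub_rev]
      have h5 : dist x p = ‖x - p‖ := dist_eq_norm x p
      rw [h5]
      linarith
    rw [div_le_iff₀ (by linarith)] at h1
    simp only [hg]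
    linarith
  have hgeq : ∀ i, ∀ x ∈ C i, g i x = f x := by
    intro i x hx
    simp only [hg]
    have hz : dI i x = 0 :=
      Metric.infDist_zero_of_mem (show x ∈ D i from Set.mem_insert_of_mem _ hx)
    rw [hz, hfLc i x hx]
    ring
  choose K hKbody hKsupp using fun i =>
    PLAux.sublinear_body (g i) (hghom i) (hgadd i) (3 * M) (hgR i)
  refine ⟨m', K, hKbody, fun x => ?_⟩
  apply le_antisymm
  · apply le_ciInf
    intro i
    rw [hKsupp i x]
    exact hgf i x
  · obtain ⟨i, hi⟩ := hmem x
    have : suppFn (K i) x = f x := by rw [hKsupp i x, hgeq i x hi]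
    calc ⨅ j, suppFn (K j) x ≤ suppFn (K i) x := ciInf_le (Finite.bddBelow_range _) i
      _ = f x := this

end
end

section
/- Let n ≥ 2 and let u ∈ C¹(S^{n−1}) be a continuously differentiable real-valued function on the sphere. Then there exists a sequence f_i of restrictions to S^{n−1} of piecewise linear functions on ℝ^n such that f_i τ-converges to u as i → ∞. -/
open MeasureTheory Filter Topology Metric Set
open scoped InnerProductSpace ENNReal NNReal Pointwise

noncomputable section

/-- The unit sphere `S^{n-1} ⊆ ℝ^n`. -/
abbrev Sph (n : ℕ) := Metric.sphere (0 : Eucl n) 1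

/-- The Hausdorff measure `H^{n-1}` on the unit sphere of `ℝ^n`. -/
def sphMeasure (n : ℕ) : Measure (Sph n) := μH[(n : ℝ) - 1]

open Classical in
/-- The 1-homogeneous extension of a function on the sphere to `ℝ^n`. -/
def homExt {n : ℕ} (u : Sph n → ℝ) (x : Eucl n) : ℝ :=
  if hx : x = 0 then 0
  else ‖x‖ * u ⟨‖x‖⁻¹ • x, by
    rw [mem_sphere_zero_iff_norm, norm_smul, norm_inv, norm_norm,
      inv_mul_cancel₀ (norm_ne_zero_iff.mpr hx)]⟩

/-- `u` is differentiable at `x ∈ S^{n-1}` (as a function on the sphere): its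
1-homogeneous extension is differentiable at `x`. -/
def SphDiffAt {n : ℕ} (u : Sph n → ℝ) (x : Sph n) : Prop :=
  DifferentiableAt ℝ (homExt u) (x : Eucl n)

/-- The spherical gradient of `u` at `x ∈ S^{n-1}`: the gradient of the
1-homogeneous extension minus its radial component.  It is the tangent vector
to the sphere representing the differential of `u` at `x`. -/
def sphGrad {n : ℕ} (u : Sph n → ℝ) (x : Sph n) : Eucl n :=
  gradient (homExt u) (x : Eucl n) - u x • (x : Eucl n)

/-- `u : S^{n-1} → ℝ` is Lipschitz. -/
def IsLip {n : ℕ} (u : Sph n → ℝ) : Prop := ∃ L : ℝ≥0, LipschitzWith L u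

/-- τ-convergence of a sequence of functions on the sphere: uniform convergence,
`H^{n-1}`-a.e. convergence of the spherical gradients, and a uniform a.e. bound
on the norms of the spherical gradients. -/
def TauTendsto {n : ℕ} (u_ : ℕ → Sph n → ℝ) (u : Sph n → ℝ) : Prop :=
  TendstoUniformly u_ u atTop ∧
  (∀ᵐ x ∂sphMeasure n, Tendsto (fun i => sphGrad (u_ i) x) atTop (𝓝 (sphGrad u x))) ∧
  ∃ C : ℝ, 0 < C ∧ ∀ i, ∀ᵐ x ∂sphMeasure n, ‖sphGrad (u_ i) x‖ ≤ C

/-- `μ` is a valuation on `Lip(S^{n-1})`: it is finitely additive with respect to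
pointwise maximum and minimum of Lipschitz functions. -/
def IsValuation {n : ℕ} (μ : (Sph n → ℝ) → ℝ) : Prop :=
  ∀ u v : Sph n → ℝ, IsLip u → IsLip v → μ (u ⊔ v) + μ (u ⊓ v) = μ u + μ v

/-- `μ` is continuous on `Lip(S^{n-1})` with respect to τ-convergence. -/
def TauContinuous {n : ℕ} (μ : (Sph n → ℝ) → ℝ) : Prop :=
  ∀ (u_ : ℕ → Sph n → ℝ) (u : Sph n → ℝ), (∀ i, IsLip (u_ i)) → IsLip u →
    TauTendsto u_ u → Tendsto (fun i => μ (u_ i)) atTop (𝓝 (μ u))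

/-- A rotation `φ ∈ O(n)` acting on the sphere. -/
def sphMap {n : ℕ} (φ : Eucl n ≃ₗᵢ[ℝ] Eucl n) (x : Sph n) : Sph n :=
  ⟨φ x, by
    rw [mem_sphere_zero_iff_norm, φ.norm_map]
    exact mem_sphere_zero_iff_norm.mp x.2⟩

/-- `μ` is rotation invariant: `μ (u ∘ φ) = μ u` for every `φ ∈ O(n)`. -/
def RotationInvariant {n : ℕ} (μ : (Sph n → ℝ) → ℝ) : Prop :=
  ∀ u : Sph n → ℝ, IsLip u → ∀ φ : Eucl n ≃ₗᵢ[ℝ] Eucl n, μ (u ∘ sphMap φ) = μ u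

/-- `μ` is dot product invariant: invariant under adding restrictions to the
sphere of linear functions `⟨·, y⟩`. -/
def DotProductInvariant {n : ℕ} (μ : (Sph n → ℝ) → ℝ) : Prop :=
  ∀ u : Sph n → ℝ, IsLip u → ∀ y : Eucl n,
    μ (fun x => u x + ⟪(x : Eucl n), y⟫_ℝ) = μ u

/-- `μ` is homogeneous of degree `i`. -/
def IsHomogeneous {n : ℕ} (μ : (Sph n → ℝ) → ℝ) (i : ℕ) : Prop :=
  ∀ u : Sph n → ℝ, IsLip u → ∀ lam : ℝ, 0 < lam →
    μ (fun x => lam * u x) = lam ^ i * μ u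

/-- `h` belongs to `𝓗(S^{n-1})`: `h` is the restriction to the sphere of the
support function of some convex body. -/
def IsSuppRestriction {n : ℕ} (h : Sph n → ℝ) : Prop :=
  ∃ K : Set (Eucl n), IsConvexBody K ∧ ∀ x : Sph n, h x = suppFn K (x : Eucl n)

namespace PLApprox

variable {n : ℕ}

lemma homExt_zero (u : Sph n → ℝ) : homExt u 0 = 0 := dif_pos rfl

lemma sph_norm (x : Sph n) : ‖(x : Eucl n)‖ = 1 := mem_sphere_zero_iff_norm.mp x.2

lemma sph_ne_zero (x : Sph n) : (x : Eucl n) ≠ 0 := by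
  intro h
  have := sph_norm x
  rw [h, norm_zero] at this; norm_num at this

lemma homExt_coe (u : Sph n → ℝ) (x : Sph n) : homExt u (x : Eucl n) = u x := by
  rw [homExt, dif_neg (sph_ne_zero x)]
  simp only [sph_norm x, one_mul, inv_one, one_smul, Subtype.coe_eta]

lemma homExt_smul (u : Sph n → ℝ) {t : ℝ} (ht : 0 ≤ t) (x : Eucl n) :
    homExt u (t • x) = t * homExt u x := by
  rcases eq_or_lt_of_le ht with h | h
  · rw [← h, zero_smul]; simp [homExt_zero]
  rcases eq_or_ne x 0 with rfl | hx
  · simp [smul_zero, homExt_zero]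
  have hxn : ‖x‖ ≠ 0 := norm_ne_zero_iff.mpr hx
  have htx : t • x ≠ 0 := smul_ne_zero h.ne' hx
  rw [homExt, dif_neg htx, homExt, dif_neg hx]
  have key : (⟨‖t • x‖⁻¹ • (t • x), by
      rw [mem_sphere_zero_iff_norm, norm_smul, norm_inv, norm_norm,
        inv_mul_cancel₀ (norm_ne_zero_iff.mpr htx)]⟩ : Sph n)
      = ⟨‖x‖⁻¹ • x, by
      rw [mem_sphere_zero_iff_norm, norm_smul, norm_inv, norm_norm,
        inv_mul_cancel₀ (norm_ne_zero_iff.mpr hx)]⟩ := by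
    apply Subtype.ext
    show ‖t • x‖⁻¹ • (t • x) = ‖x‖⁻¹ • x
    rw [norm_smul, Real.norm_eq_abs, abs_of_pos h, smul_smul]
    congr 1
    field_simp
  rw [key, norm_smul, Real.norm_eq_abs, abs_of_pos h]
  ring

/-- A function positively homogeneous of degree 1. -/
def Homog1 (f : Eucl n → ℝ) : Prop := ∀ t : ℝ, 0 ≤ t → ∀ x : Eucl n, f (t • x) = t * f x

lemma homog1_homExt (u : Sph n → ℝ) : Homog1 (homExt u) := fun _ ht x => homExt_smul u ht x

lemma Homog1.zero_eq {f : Eucl n → ℝ} (hf : Homog1 f) : f 0 = 0 := by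
  have := hf 0 le_rfl 0
  simpa using this

lemma homExt_eq_of_homog {f : Eucl n → ℝ} (hf : Homog1 f) :
    homExt (fun x : Sph n => f (x : Eucl n)) = f := by
  funext x
  rcases eq_or_ne x 0 with rfl | hx
  · rw [homExt_zero, hf.zero_eq]
  rw [homExt, dif_neg hx]
  show ‖x‖ * f (‖x‖⁻¹ • x) = f x
  have hxn : (0:ℝ) < ‖x‖ := norm_pos_iff.mpr hx
  rw [← hf ‖x‖ hxn.le (‖x‖⁻¹ • x), smul_smul, mul_inv_cancel₀ hxn.ne', one_smul]

/-- Euler's identity for positively 1-homogeneous differentiable functions. -/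
lemma Homog1.euler {f : Eucl n → ℝ} (hf : Homog1 f) {x : Eucl n}
    (hd : DifferentiableAt ℝ f x) : fderiv ℝ f x x = f x := by
  have h1 : HasDerivAt (fun t : ℝ => f (t • x)) (fderiv ℝ f x x) 1 := by
    have hline : HasDerivAt (fun t : ℝ => t • x) x 1 := by
      simpa using (hasDerivAt_id (1:ℝ)).smul_const x
    have hd' : HasFDerivAt f (fderiv ℝ f x) ((1:ℝ) • x) := by
      simpa using hd.hasFDerivAt
    have := hd'.comp_hasDerivAt (1:ℝ) hline
    exact this
  have h2 : HasDerivAt (fun t : ℝ => t * f x) (f x) 1 := by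
    simpa using (hasDerivAt_id (1:ℝ)).mul_const (f x)
  have heq : (fun t : ℝ => f (t • x)) =ᶠ[nhds (1:ℝ)] fun t => t * f x := by
    filter_upwards [eventually_gt_nhds (show (0:ℝ) < 1 by norm_num)] with t ht
    exact hf t ht.le x
  have h3 : HasDerivAt (fun t : ℝ => t * f x) (fderiv ℝ f x x) 1 :=
    h1.congr_of_eventuallyEq heq.symm
  exact (h3.unique h2).symm ▸ rfl

end PLApprox

namespace PLApprox

variable {n : ℕ}

/-- Maximum of the linear functions `⟪·, v⟫`, `v ∈ A`. -/
def maxLin (A : Finset (Eucl n)) (hA : A.Nonempty) (x : Eucl n) : ℝ :=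
  A.sup' hA fun v => ⟪x, v⟫_ℝ

lemma maxLin_le {A : Finset (Eucl n)} {hA : A.Nonempty} {x : Eucl n} {c : ℝ}
    (h : ∀ v ∈ A, ⟪x, v⟫_ℝ ≤ c) : maxLin A hA x ≤ c :=
  Finset.sup'_le _ _ h

lemma le_maxLin {A : Finset (Eucl n)} (hA : A.Nonempty) {x v : Eucl n} (hv : v ∈ A) :
    ⟪x, v⟫_ℝ ≤ maxLin A hA x :=
  Finset.le_sup' _ hv

lemma exists_maxLin (A : Finset (Eucl n)) (hA : A.Nonempty) (x : Eucl n) :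
    ∃ v ∈ A, (maxLin A hA x = ⟪x, v⟫_ℝ ∧ ∀ w ∈ A, ⟪x, w⟫_ℝ ≤ ⟪x, v⟫_ℝ) := by
  obtain ⟨v, hv, hev⟩ := Finset.exists_mem_eq_sup' hA (fun v => ⟪x, v⟫_ℝ)
  exact ⟨v, hv, hev, fun w hw => hev ▸ le_maxLin hA hw⟩

lemma continuous_inner_right (v : Eucl n) : Continuous (fun y : Eucl n => ⟪y, v⟫_ℝ) :=
  continuous_id.inner continuous_const

lemma continuous_maxLin (A : Finset (Eucl n)) (hA : A.Nonempty) :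
    Continuous (maxLin A hA) := by
  apply Continuous.finset_sup'_apply hA
  exact fun v _ => continuous_inner_right v

lemma maxLin_smul (A : Finset (Eucl n)) (hA : A.Nonempty) {t : ℝ} (ht : 0 ≤ t) (x : Eucl n) :
    maxLin A hA (t • x) = t * maxLin A hA x := by
  apply le_antisymm
  · apply maxLin_le; intro v hv
    rw [real_inner_smul_left]
    exact mul_le_mul_of_nonneg_left (le_maxLin hA hv) ht
  · obtain ⟨v, hv, hev, -⟩ := exists_maxLin A hA x
    rw [hev, ← real_inner_smul_left]
    exact le_maxLin hA hv

lemma maxLin_eq_of_max {A : Finset (Eucl n)} {hA : A.Nonempty} {x v : Eucl n} (hv : v ∈ A)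
    (hmax : ∀ w ∈ A, ⟪x, w⟫_ℝ ≤ ⟪x, v⟫_ℝ) : maxLin A hA x = ⟪x, v⟫_ℝ :=
  le_antisymm (maxLin_le hmax) (le_maxLin hA hv)

lemma maxLin_eventuallyEq {A : Finset (Eucl n)} {hA : A.Nonempty} {x v : Eucl n} (hv : v ∈ A)
    (hstrict : ∀ w ∈ A, w ≠ v → ⟪x, w⟫_ℝ < ⟪x, v⟫_ℝ) :
    maxLin A hA =ᶠ[nhds x] fun y => ⟪y, v⟫_ℝ := by
  classical
  have hUopen : IsOpen (⋂ w ∈ A.erase v, {y : Eucl n | ⟪y, w⟫_ℝ < ⟪y, v⟫_ℝ}) :=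
    isOpen_biInter_finset fun w _ =>
      isOpen_lt (continuous_inner_right w) (continuous_inner_right v)
  have hxU : x ∈ ⋂ w ∈ A.erase v, {y : Eucl n | ⟪y, w⟫_ℝ < ⟪y, v⟫_ℝ} :=
    mem_iInter₂.mpr fun w hw =>
      hstrict w (Finset.mem_of_mem_erase hw) (Finset.ne_of_mem_erase hw)
  filter_upwards [hUopen.mem_nhds hxU] with y hy
  apply maxLin_eq_of_max hv
  intro w hw
  rcases eq_or_ne w v with rfl | hne
  · exact le_rfl
  · exact (mem_iInter₂.mp hy w (Finset.mem_erase.mpr ⟨hne, hw⟩)).le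

lemma hasGradientAt_inner_right (v x : Eucl n) :
    HasGradientAt (fun y : Eucl n => ⟪y, v⟫_ℝ) v x := by
  rw [hasGradientAt_iff_hasFDerivAt]
  apply ((InnerProductSpace.toDual ℝ (Eucl n)) v).hasFDerivAt.congr_of_eventuallyEq
  filter_upwards with y
  simp only [InnerProductSpace.toDual_apply_apply]
  exact real_inner_comm v y

lemma maxLin_sub_hasGradientAt {A B : Finset (Eucl n)} {hA : A.Nonempty} {hB : B.Nonempty}
    {x v w : Eucl n} (hv : v ∈ A) (hw : w ∈ B)
    (hsv : ∀ v' ∈ A, v' ≠ v → ⟪x, v'⟫_ℝ < ⟪x, v⟫_ℝ)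
    (hsw : ∀ w' ∈ B, w' ≠ w → ⟪x, w'⟫_ℝ < ⟪x, w⟫_ℝ) :
    HasGradientAt (fun y => maxLin A hA y - maxLin B hB y) (v - w) x := by
  rw [hasGradientAt_iff_hasFDerivAt]
  have g1 : HasFDerivAt (fun y : Eucl n => ⟪y, v⟫_ℝ)
      ((InnerProductSpace.toDual ℝ (Eucl n)) v) x :=
    hasGradientAt_iff_hasFDerivAt.mp (hasGradientAt_inner_right v x)
  have g2 : HasFDerivAt (fun y : Eucl n => ⟪y, w⟫_ℝ)
      ((InnerProductSpace.toDual ℝ (Eucl n)) w) x :=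
    hasGradientAt_iff_hasFDerivAt.mp (hasGradientAt_inner_right w x)
  have e1 := maxLin_eventuallyEq (hA := hA) hv hsv
  have e2 := maxLin_eventuallyEq (hA := hB) hw hsw
  have := (g1.sub g2).congr_of_eventuallyEq (e1.sub e2)
  rw [map_sub]; exact this

lemma hyperplane_open_empty {d : Eucl n} (hd : d ≠ 0) {U : Set (Eucl n)}
    (hU : IsOpen U) (hsub : ∀ x ∈ U, ⟪x, d⟫_ℝ = 0) : U = ∅ := by
  by_contra h
  obtain ⟨x, hx⟩ := Set.nonempty_iff_ne_empty.mpr h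
  obtain ⟨ε, hε, hball⟩ := Metric.isOpen_iff.mp hU x hx
  have hdn : 0 < ‖d‖ := norm_pos_iff.mpr hd
  set t := ε / (2 * ‖d‖) with htdef
  have ht : 0 < t := by positivity
  have hmem : x + t • d ∈ U := by
    apply hball
    rw [mem_ball_iff_norm, add_sub_cancel_left, norm_smul, Real.norm_eq_abs, abs_of_pos ht]
    calc t * ‖d‖ = ε / 2 := by rw [htdef]; field_simp
    _ < ε := by linarith
  have h1 := hsub x hx
  have h2 := hsub _ hmem
  rw [inner_add_left, h1, real_inner_smul_left, real_inner_self_eq_norm_sq] at h2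
  nlinarith [pow_pos hdn 2]

lemma isClosed_coneSet (A B : Finset (Eucl n)) (a b : Eucl n) :
    IsClosed {x : Eucl n | (∀ w ∈ A, ⟪x, w⟫_ℝ ≤ ⟪x, a⟫_ℝ) ∧ (∀ w ∈ B, ⟪x, w⟫_ℝ ≤ ⟪x, b⟫_ℝ)} := by
  have h : {x : Eucl n | (∀ w ∈ A, ⟪x, w⟫_ℝ ≤ ⟪x, a⟫_ℝ) ∧ (∀ w ∈ B, ⟪x, w⟫_ℝ ≤ ⟪x, b⟫_ℝ)}
      = (⋂ w ∈ (A : Set (Eucl n)), {x : Eucl n | ⟪x, w⟫_ℝ ≤ ⟪x, a⟫_ℝ}) ∩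
        (⋂ w ∈ (B : Set (Eucl n)), {x : Eucl n | ⟪x, w⟫_ℝ ≤ ⟪x, b⟫_ℝ}) := by
    ext y
    simp only [Set.mem_setOf_eq, Set.mem_inter_iff, Set.mem_iInter, Finset.mem_coe]
  rw [h]
  exact IsClosed.inter
    (isClosed_biInter fun w _ => isClosed_le (continuous_inner_right w) (continuous_inner_right a))
    (isClosed_biInter fun w _ => isClosed_le (continuous_inner_right w) (continuous_inner_right b))

lemma isPiecewiseLinear_maxLin_sub (A B : Finset (Eucl n)) (hA : A.Nonempty) (hB : B.Nonempty) :
    IsPiecewiseLinear (fun x => maxLin A hA x - maxLin B hB x) := by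
  classical
  refine ⟨(continuous_maxLin A hA).sub (continuous_maxLin B hB), (A ×ˢ B).card,
    (fun i => {x | (∀ w ∈ A, ⟪x, w⟫_ℝ ≤ ⟪x, (((A ×ˢ B).equivFin.symm i : (A ×ˢ B)) : Eucl n × Eucl n).1⟫_ℝ) ∧
      (∀ w ∈ B, ⟪x, w⟫_ℝ ≤ ⟪x, (((A ×ˢ B).equivFin.symm i : (A ×ˢ B)) : Eucl n × Eucl n).2⟫_ℝ)}),
    (fun i => ((InnerProductSpace.toDual ℝ (Eucl n))
      ((((A ×ˢ B).equivFin.symm i : (A ×ˢ B)) : Eucl n × Eucl n).1 -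
       (((A ×ˢ B).equivFin.symm i : (A ×ˢ B)) : Eucl n × Eucl n).2)).toLinearMap),
    ?_, ?_, ?_, ?_, ?_, ?_⟩
  · -- closed
    exact fun i => isClosed_coneSet A B _ _
  · -- convex
    intro i
    set p := (((A ×ˢ B).equivFin.symm i : (A ×ˢ B)) : Eucl n × Eucl n)
    intro x hx y hy s t hs ht hst
    constructor
    · intro w hw
      simp only [inner_add_left, real_inner_smul_left]
      exact add_le_add (mul_le_mul_of_nonneg_left (hx.1 w hw) hs)
        (mul_le_mul_of_nonneg_left (hy.1 w hw) ht)
    · intro w hw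
      simp only [inner_add_left, real_inner_smul_left]
      exact add_le_add (mul_le_mul_of_nonneg_left (hx.2 w hw) hs)
        (mul_le_mul_of_nonneg_left (hy.2 w hw) ht)
  · -- cone
    intro i t ht x hx
    constructor
    · intro w hw
      simp only [real_inner_smul_left]
      exact mul_le_mul_of_nonneg_left (hx.1 w hw) ht
    · intro w hw
      simp only [real_inner_smul_left]
      exact mul_le_mul_of_nonneg_left (hx.2 w hw) ht
  · -- pairwise disjoint interiors
    intro i j hij
    set pi' := (((A ×ˢ B).equivFin.symm i : (A ×ˢ B)) : Eucl n × Eucl n) with hpi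
    set pj' := (((A ×ˢ B).equivFin.symm j : (A ×ˢ B)) : Eucl n × Eucl n) with hpj
    have hpne : pi' ≠ pj' := by
      intro h
      apply hij
      have := Subtype.ext (p := fun q => q ∈ A ×ˢ B) h
      exact (A ×ˢ B).equivFin.symm.injective this
    have hmemi : ∀ x ∈ interior {x : Eucl n |
        (∀ w ∈ A, ⟪x, w⟫_ℝ ≤ ⟪x, pi'.1⟫_ℝ) ∧ (∀ w ∈ B, ⟪x, w⟫_ℝ ≤ ⟪x, pi'.2⟫_ℝ)} ∩
        interior {x : Eucl n |
        (∀ w ∈ A, ⟪x, w⟫_ℝ ≤ ⟪x, pj'.1⟫_ℝ) ∧ (∀ w ∈ B, ⟪x, w⟫_ℝ ≤ ⟪x, pj'.2⟫_ℝ)},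
        ⟪x, pi'.1 - pj'.1⟫_ℝ = 0 ∧ ⟪x, pi'.2 - pj'.2⟫_ℝ = 0 := by
      intro x hx
      have hxi := interior_subset hx.1
      have hxj := interior_subset hx.2
      have hi1 : pi'.1 ∈ A := (Finset.mem_product.mp ((A ×ˢ B).equivFin.symm i).2).1
      have hi2 : pi'.2 ∈ B := (Finset.mem_product.mp ((A ×ˢ B).equivFin.symm i).2).2
      have hj1 : pj'.1 ∈ A := (Finset.mem_product.mp ((A ×ˢ B).equivFin.symm j).2).1
      have hj2 : pj'.2 ∈ B := (Finset.mem_product.mp ((A ×ˢ B).equivFin.symm j).2).2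
      constructor
      · rw [inner_sub_right, sub_eq_zero]
        exact le_antisymm (hxj.1 pi'.1 hi1) (hxi.1 pj'.1 hj1)
      · rw [inner_sub_right, sub_eq_zero]
        exact le_antisymm (hxj.2 pi'.2 hi2) (hxi.2 pj'.2 hj2)
    by_cases h1 : pi'.1 = pj'.1
    · have h2 : pi'.2 ≠ pj'.2 := by
        intro h2; exact hpne (Prod.ext h1 h2)
      apply hyperplane_open_empty (sub_ne_zero.mpr h2) (isOpen_interior.inter isOpen_interior)
      exact fun x hx => (hmemi x hx).2
    · apply hyperplane_open_empty (sub_ne_zero.mpr h1) (isOpen_interior.inter isOpen_interior)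
      exact fun x hx => (hmemi x hx).1
  · -- union is univ
    apply Set.eq_univ_of_forall
    intro x
    rw [Set.mem_iUnion]
    obtain ⟨v, hv, -, hvmax⟩ := exists_maxLin A hA x
    obtain ⟨w, hw, -, hwmax⟩ := exists_maxLin B hB x
    have hp : (v, w) ∈ A ×ˢ B := Finset.mem_product.mpr ⟨hv, hw⟩
    refine ⟨(A ×ˢ B).equivFin ⟨(v, w), hp⟩, ?_⟩
    simp only [Equiv.symm_apply_apply, Set.mem_setOf_eq]
    exact ⟨hvmax, hwmax⟩
  · -- f = L i on C i
    intro i x hx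
    set p := (((A ×ˢ B).equivFin.symm i : (A ×ˢ B)) : Eucl n × Eucl n)
    have hp1 : p.1 ∈ A := (Finset.mem_product.mp ((A ×ˢ B).equivFin.symm i).2).1
    have hp2 : p.2 ∈ B := (Finset.mem_product.mp ((A ×ˢ B).equivFin.symm i).2).2
    have e1 : maxLin A hA x = ⟪x, p.1⟫_ℝ := maxLin_eq_of_max hp1 hx.1
    have e2 : maxLin B hB x = ⟪x, p.2⟫_ℝ := maxLin_eq_of_max hp2 hx.2
    simp only [e1, e2, ContinuousLinearMap.coe_coe, InnerProductSpace.toDual_apply_apply,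
      inner_sub_left]
    rw [real_inner_comm p.1 x, real_inner_comm p.2 x]

end PLApprox

namespace PLApprox

variable {n : ℕ}

lemma sphere_null_of_euclidean {m : ℕ} (hm : 1 ≤ m) :
    μH[(m : ℝ)] (sphere (0 : EuclideanSpace ℝ (Fin m)) 1) = 0 := by
  haveI : Nonempty (Fin m) := ⟨⟨0, hm⟩⟩
  haveI : Nontrivial (EuclideanSpace ℝ (Fin m)) := by
    refine ⟨EuclideanSpace.single ⟨0, hm⟩ (1:ℝ), 0, ?_⟩
    intro h
    have := congrArg (fun z => ‖z‖) h
    simp [EuclideanSpace.norm_single] at this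
  set S := sphere (0 : EuclideanSpace ℝ (Fin m)) 1
  set f := WithLp.equiv 2 (Fin m → ℝ)
  obtain ⟨K, hK⟩ : ∃ K : ℝ≥0, AntilipschitzWith K ⇑f :=
    ⟨_, PiLp.antilipschitzWith_ofLp 2 (fun _ : Fin m => ℝ)⟩
  have h1 : S = ⇑f ⁻¹' (⇑f '' S) := by
    rw [Set.preimage_image_eq _ f.injective]
  have h2 : μH[(m : ℝ)] S ≤ (K : ℝ≥0∞) ^ (m : ℝ) * μH[(m : ℝ)] (⇑f '' S) := by
    calc μH[(m : ℝ)] S = μH[(m : ℝ)] (⇑f ⁻¹' (⇑f '' S)) := by rw [← h1]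
    _ ≤ (K : ℝ≥0∞) ^ (m : ℝ) * μH[(m : ℝ)] (⇑f '' S) :=
      hK.hausdorffMeasure_preimage_le (Nat.cast_nonneg m) (⇑f '' S)
  have h3 : μH[(m : ℝ)] (⇑f '' S) = volume (⇑f '' S) := by
    have := MeasureTheory.hausdorffMeasure_pi_real (ι := Fin m)
    rw [Fintype.card_fin] at this
    rw [this]
  have h4 : volume (⇑f '' S) = volume S := by
    have hps : ⇑f '' S = ⇑(MeasurableEquiv.toLp 2 (Fin m → ℝ)) ⁻¹' S := by
      ext y
      constructor
      · rintro ⟨z, hz, rfl⟩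
        simpa [f] using hz
      · intro hy
        exact ⟨WithLp.toLp 2 y, hy, rfl⟩
    rw [hps]
    exact ((EuclideanSpace.volume_preserving_symm_measurableEquiv_toLp (Fin m)).symm).measure_preimage
      (isClosed_sphere.measurableSet.nullMeasurableSet)
  have h5 : volume S = 0 := Measure.addHaar_sphere volume 0 1
  rw [h3, h4, h5, mul_zero] at h2
  exact le_antisymm h2 (by simp)

lemma sphMeasure_hyperplane_null (hn : 2 ≤ n) {d : Eucl n} (hd : d ≠ 0) :
    sphMeasure n {x : Sph n | ⟪(x : Eucl n), d⟫_ℝ = 0} = 0 := by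
  have h0 : (0:ℝ) ≤ (n : ℝ) - 1 := by
    have : (2:ℝ) ≤ (n:ℝ) := by exact_mod_cast hn
    linarith
  rw [sphMeasure]
  set E := {x : Sph n | ⟪(x : Eucl n), d⟫_ℝ = 0}
  have step1 : μH[(n:ℝ)-1] E = μH[(n:ℝ)-1] (Subtype.val '' E) :=
    (isometry_subtype_coe.hausdorffMeasure_image (Or.inl h0) E).symm
  rw [step1]
  set V := (Submodule.span ℝ ({d} : Set (Eucl n)))ᗮ
  have hsub : Subtype.val '' E ⊆ (Submodule.subtypeₗᵢ V) '' (sphere (0 : V) 1) := by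
    rintro y ⟨x, hx, rfl⟩
    have hyV : (x : Eucl n) ∈ V := by
      rw [Submodule.mem_orthogonal_singleton_iff_inner_right]
      rw [real_inner_comm]
      exact hx
    refine ⟨⟨(x : Eucl n), hyV⟩, ?_, rfl⟩
    rw [mem_sphere_zero_iff_norm]
    exact sph_norm x
  apply measure_mono_null hsub
  have step2 : μH[(n:ℝ)-1] ((Submodule.subtypeₗᵢ V) '' (sphere (0 : V) 1))
      = μH[(n:ℝ)-1] (sphere (0 : V) 1) :=
    (Submodule.subtypeₗᵢ V).isometry.hausdorffMeasure_image (Or.inl h0) _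
  rw [step2]
  haveI : FiniteDimensional ℝ V := inferInstance
  set m := Module.finrank ℝ V with hmdef
  have hm : m = n - 1 := by
    have h1 : Module.finrank ℝ ↥(Submodule.span ℝ ({d} : Set (Eucl n))) + m
        = Module.finrank ℝ (Eucl n) := by
      rw [hmdef]
      exact Submodule.finrank_add_finrank_orthogonal (Submodule.span ℝ ({d} : Set (Eucl n)))
    rw [finrank_span_singleton hd] at h1
    have h2 : Module.finrank ℝ (Eucl n) = n := finrank_euclideanSpace_fin
    rw [h2] at h1
    omega
  have hm1 : 1 ≤ m := by omega
  set L := (stdOrthonormalBasis ℝ V).repr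
  have step3 : μH[(n:ℝ)-1] (sphere (0 : V) 1) = μH[(n:ℝ)-1] (⇑L '' (sphere (0 : V) 1)) :=
    (L.isometry.hausdorffMeasure_image (Or.inl h0) _).symm
  rw [step3]
  have hsub2 : ⇑L '' (sphere (0 : V) 1) ⊆ sphere (0 : EuclideanSpace ℝ (Fin m)) 1 := by
    rintro y ⟨z, hz, rfl⟩
    rw [mem_sphere_zero_iff_norm, L.norm_map]
    exact mem_sphere_zero_iff_norm.mp hz
  apply measure_mono_null hsub2
  have hcast : (n : ℝ) - 1 = (m : ℝ) := by
    rw [hm]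
    have : ((n - 1 : ℕ) : ℝ) = (n : ℝ) - 1 := by
      have : 1 ≤ n := by omega
      push_cast [Nat.cast_sub this]
      ring
    rw [this]
  rw [hcast]
  exact sphere_null_of_euclidean hm1

end PLApprox

namespace PLApprox

variable {n : ℕ}

lemma exists_smooth_approx (u : Sph n → ℝ) (hu : ContDiffOn ℝ 1 (homExt u) {(0 : Eucl n)}ᶜ)
    {η : ℝ} (hη : 0 < η) :
    ∃ H : Eucl n → ℝ, ContDiff ℝ 2 H ∧ ∀ x : Eucl n, ‖x‖ = 1 →
      |H x - homExt u x| ≤ η ∧ ‖fderiv ℝ H x - fderiv ℝ (homExt u) x‖ ≤ η := by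
  classical
  set F := homExt u with hF
  -- cutoff
  set B1 : ContDiffBump (0 : Eucl n) := ⟨2, 3, by norm_num, by norm_num⟩ with hB1
  set B2 : ContDiffBump (0 : Eucl n) := ⟨8⁻¹, 4⁻¹, by norm_num, by norm_num⟩ with hB2
  have hB1rIn : B1.rIn = 2 := rfl
  have hB1rOut : B1.rOut = 3 := rfl
  have hB2rIn : B2.rIn = 8⁻¹ := rfl
  have hB2rOut : B2.rOut = 4⁻¹ := rfl
  set Ft : Eucl n → ℝ := fun x => (B1 x * (1 - B2 x)) * F x with hFt
  have hχ : ContDiff ℝ 1 (fun x : Eucl n => B1 x * (1 - B2 x)) := by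
    have h1 : ContDiff ℝ 1 ⇑B1 := by exact_mod_cast B1.contDiff (n := 1)
    have h2 : ContDiff ℝ 1 ⇑B2 := by exact_mod_cast B2.contDiff (n := 1)
    exact h1.mul (contDiff_const.sub h2)
  have hFt1 : ContDiff ℝ 1 Ft := by
    rw [contDiff_iff_contDiffAt]
    intro x
    rcases eq_or_ne x 0 with rfl | hx
    · apply ContDiffAt.congr_of_eventuallyEq (contDiffAt_const (c := (0:ℝ)))
      have hball : Metric.ball (0 : Eucl n) 8⁻¹ ∈ nhds (0 : Eucl n) :=
        Metric.ball_mem_nhds 0 (by norm_num)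
      filter_upwards [hball] with y hy
      have : B2 y = 1 := B2.one_of_mem_closedBall (by
        rw [Metric.mem_closedBall, hB2rIn]
        have := Metric.mem_ball.mp hy
        linarith)
      simp [hFt, this]
    · exact (hχ.contDiffAt).mul (hu.contDiffAt ((isOpen_compl_singleton).mem_nhds hx))
  have hFtc : Continuous Ft := hFt1.continuous
  have hFtsupp : HasCompactSupport Ft := by
    apply HasCompactSupport.intro (isCompact_closedBall (0 : Eucl n) 3)
    intro x hx
    have hxn : 3 ≤ ‖x‖ := by
      by_contra h
      exact hx (Metric.mem_closedBall.mpr (by rw [dist_zero_right]; linarith))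
    have : B1 x = 0 := B1.zero_of_le_dist (by rw [dist_zero_right, hB1rOut]; exact hxn)
    simp [hFt, this]
  have hFteq : ∀ x : Eucl n, 4⁻¹ < ‖x‖ → ‖x‖ < 2 → Ft x = F x := by
    intro x h1 h2
    have hb1 : B1 x = 1 := B1.one_of_mem_closedBall
      (Metric.mem_closedBall.mpr (by rw [dist_zero_right, hB1rIn]; linarith))
    have hb2 : B2 x = 0 := B2.zero_of_le_dist (by rw [dist_zero_right, hB2rOut]; linarith)
    simp [hFt, hb1, hb2]
  have hUopen : IsOpen {y : Eucl n | 4⁻¹ < ‖y‖ ∧ ‖y‖ < 2} :=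
    (isOpen_lt continuous_const continuous_norm).inter (isOpen_lt continuous_norm continuous_const)
  have hfdeq : ∀ x : Eucl n, ‖x‖ = 1 → fderiv ℝ Ft x = fderiv ℝ F x := by
    intro x hx
    apply Filter.EventuallyEq.fderiv_eq
    have hxU : x ∈ {y : Eucl n | 4⁻¹ < ‖y‖ ∧ ‖y‖ < 2} := by
      constructor <;> rw [hx] <;> norm_num
    filter_upwards [hUopen.mem_nhds hxU] with y hy
    exact hFteq y hy.1 hy.2
  -- moduli of continuity
  have hu1 : UniformContinuous Ft := hFtsupp.uniformContinuous_of_continuous hFtc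
  have hu2 : UniformContinuous (fderiv ℝ Ft) :=
    (hFtsupp.fderiv ℝ).uniformContinuous_of_continuous (hFt1.continuous_fderiv one_ne_zero)
  obtain ⟨δ1, hδ1, hmod1⟩ := Metric.uniformContinuous_iff.mp hu1 η hη
  obtain ⟨δ2, hδ2, hmod2⟩ := Metric.uniformContinuous_iff.mp hu2 η hη
  set δ := min δ1 δ2 with hδdef
  have hδ : 0 < δ := lt_min hδ1 hδ2
  set φ : ContDiffBump (0 : Eucl n) := ⟨δ/2, δ, by positivity, by linarith⟩ with hφ
  set H := MeasureTheory.convolution (φ.normed volume) Ft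
    (ContinuousLinearMap.lsmul ℝ ℝ) volume with hH
  refine ⟨H, ?_, ?_⟩
  · -- smoothness
    apply HasCompactSupport.contDiff_convolution_left _ φ.hasCompactSupport_normed
      ?_ (hFtc.locallyIntegrable)
    exact_mod_cast φ.contDiff_normed (n := 2)
  intro x hx
  have hxne : 4⁻¹ < ‖x‖ ∧ ‖x‖ < 2 := by constructor <;> rw [hx] <;> norm_num
  constructor
  · -- values
    have h1 : dist (H x) (Ft x) ≤ η := by
      apply ContDiffBump.dist_normed_convolution_le hFtc.aestronglyMeasurable
      intro y hy
      have hlt : dist y x < δ := by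
        have := Metric.mem_ball.mp hy
        simpa [hφ] using this
      exact (hmod1 (lt_of_lt_of_le hlt (min_le_left _ _))).le
    rw [hFteq x hxne.1 hxne.2, Real.dist_eq] at h1
    exact h1
  · -- derivatives
    have hder : HasFDerivAt H (MeasureTheory.convolution (φ.normed volume) (fderiv ℝ Ft)
        ((ContinuousLinearMap.lsmul ℝ ℝ).precompR (Eucl n)) volume x) x :=
      HasCompactSupport.hasFDerivAt_convolution_right _ hFtsupp
        (φ.continuous_normed.locallyIntegrable) hFt1 x
    have hLeq : (ContinuousLinearMap.lsmul ℝ ℝ).precompR (Eucl n)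
        = (ContinuousLinearMap.lsmul ℝ ℝ :
            ℝ →L[ℝ] (Eucl n →L[ℝ] ℝ) →L[ℝ] (Eucl n →L[ℝ] ℝ)) := by
      ext r g
      simp [ContinuousLinearMap.precompR]
    rw [hLeq] at hder
    have h2 : dist (fderiv ℝ H x) (fderiv ℝ Ft x) ≤ η := by
      rw [hder.fderiv]
      apply ContDiffBump.dist_normed_convolution_le
        ((hFt1.continuous_fderiv one_ne_zero).aestronglyMeasurable)
      intro y hy
      have hlt : dist y x < δ := by
        have := Metric.mem_ball.mp hy
        simpa [hφ] using this
      exact (hmod2 (lt_of_lt_of_le hlt (min_le_right _ _))).le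
    rw [hfdeq x hx, dist_eq_norm] at h2
    exact h2

end PLApprox

namespace PLApprox

variable {n : ℕ}

lemma taylor_bound {H : Eucl n → ℝ} (hH : ContDiff ℝ 2 H) {M : ℝ}
    (hM : ∀ p ∈ Metric.closedBall (0 : Eucl n) 1, ‖fderiv ℝ (fderiv ℝ H) p‖ ≤ M)
    {x z : Eucl n} (hx : ‖x‖ ≤ 1) (hz : ‖z‖ ≤ 1) :
    |H x - H z - fderiv ℝ H z (x - z)| ≤ M * ‖x - z‖ ^ 2 := by
  have hx' : x ∈ Metric.closedBall (0 : Eucl n) 1 := by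
    simpa [Metric.mem_closedBall, dist_zero_right] using hx
  have hz' : z ∈ Metric.closedBall (0 : Eucl n) 1 := by
    simpa [Metric.mem_closedBall, dist_zero_right] using hz
  have hseg : segment ℝ z x ⊆ Metric.closedBall (0 : Eucl n) 1 :=
    (convex_closedBall _ _).segment_subset hz' hx'
  have hD1 : ContDiff ℝ 1 (fderiv ℝ H) := hH.fderiv_right (by norm_num)
  have hDH : Differentiable ℝ H := hH.differentiable (by norm_num)
  -- step 1 : the first derivative is Lipschitz-controlled on the segment
  have step1 : ∀ p ∈ segment ℝ z x, ‖fderiv ℝ H p - fderiv ℝ H z‖ ≤ M * ‖x - z‖ := by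
    intro p hp
    have hM0 : 0 ≤ M := le_trans (norm_nonneg (fderiv ℝ (fderiv ℝ H) 0)) (hM 0 (by simp))
    have h1 : ‖fderiv ℝ H p - fderiv ℝ H z‖ ≤ M * ‖p - z‖ := by
      apply Convex.norm_image_sub_le_of_norm_hasFDerivWithin_le
        (fun q hq => (hD1.differentiable one_ne_zero q).hasFDerivAt.hasFDerivWithinAt)
        (fun q hq => hM q (hseg hq)) (convex_segment z x) (left_mem_segment ℝ z x) hp
    have h2 : ‖p - z‖ ≤ ‖x - z‖ := by
      obtain ⟨a, b, ha, hb, hab, rfl⟩ := hp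
      have : a • z + b • x - z = b • (x - z) := by
        have haz : a = 1 - b := by linarith
        rw [haz]
        module
      rw [this, norm_smul, Real.norm_eq_abs, abs_of_nonneg hb]
      nlinarith [norm_nonneg (x - z)]
    calc ‖fderiv ℝ H p - fderiv ℝ H z‖ ≤ M * ‖p - z‖ := h1
    _ ≤ M * ‖x - z‖ := by nlinarith
  -- step 2 : Taylor bound
  have step2 : ‖H x - H z - (fderiv ℝ H z) (x - z)‖ ≤ (M * ‖x - z‖) * ‖x - z‖ := by
    apply Convex.norm_image_sub_le_of_norm_hasFDerivWithin_le'
      (fun q _ => (hDH q).hasFDerivAt.hasFDerivWithinAt)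
      step1 (convex_segment z x) (left_mem_segment ℝ z x) (right_mem_segment ℝ z x)
  rw [Real.norm_eq_abs] at step2
  calc |H x - H z - (fderiv ℝ H z) (x - z)| ≤ (M * ‖x - z‖) * ‖x - z‖ := step2
  _ = M * ‖x - z‖ ^ 2 := by ring

/-- Support vector attached to the base point `z` for `H + c‖·‖`. -/
def aVec (H : Eucl n → ℝ) (c : ℝ) (z : Eucl n) : Eucl n :=
  gradient H z + (H z - fderiv ℝ H z z + c) • z

lemma inner_gradient (H : Eucl n → ℝ) (z x : Eucl n) :
    ⟪x, gradient H z⟫_ℝ = fderiv ℝ H z x := by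
  rw [real_inner_comm, gradient]
  exact InnerProductSpace.toDual_symm_apply

lemma inner_aVec (H : Eucl n → ℝ) (c : ℝ) (z x : Eucl n) :
    ⟪x, aVec H c z⟫_ℝ = fderiv ℝ H z x + (H z - fderiv ℝ H z z + c) * ⟪x, z⟫_ℝ := by
  rw [aVec, inner_add_right, real_inner_smul_right, inner_gradient]

lemma bregman_key (H : Eucl n → ℝ) (c : ℝ) (x z : Eucl n) :
    H x + c - ⟪x, aVec H c z⟫_ℝ
      = (H x - H z - fderiv ℝ H z (x - z))
        + (H z - fderiv ℝ H z z) * (1 - ⟪x, z⟫_ℝ) + c * (1 - ⟪x, z⟫_ℝ) := by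
  rw [inner_aVec, map_sub]
  ring

lemma unit_inner_eq (x z : Eucl n) (hx : ‖x‖ = 1) (hz : ‖z‖ = 1) :
    1 - ⟪x, z⟫_ℝ = ‖x - z‖ ^ 2 / 2 := by
  have := norm_sub_sq_real x z
  rw [hx, hz] at this
  nlinarith [this]

lemma bregman_bounds {H : Eucl n → ℝ} (hH : ContDiff ℝ 2 H) {M E₀ c : ℝ}
    (hM : ∀ p ∈ Metric.closedBall (0 : Eucl n) 1, ‖fderiv ℝ (fderiv ℝ H) p‖ ≤ M)
    (hE : ∀ z : Eucl n, ‖z‖ = 1 → |H z - fderiv ℝ H z z| ≤ E₀)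
    (hc : 4 * M + 2 * E₀ ≤ c)
    {x z : Eucl n} (hx : ‖x‖ = 1) (hz : ‖z‖ = 1) :
    (c/4) * ‖x - z‖^2 ≤ H x + c - ⟪x, aVec H c z⟫_ℝ ∧
    H x + c - ⟪x, aVec H c z⟫_ℝ ≤ (M + c/2 + E₀/2) * ‖x - z‖^2 := by
  have hT := taylor_bound hH hM hx.le hz.le
  have hkey := bregman_key H c x z
  have hunit := unit_inner_eq x z hx hz
  have hE' := hE z hz
  have hM0 : 0 ≤ M := le_trans (norm_nonneg (fderiv ℝ (fderiv ℝ H) 0)) (hM 0 (by simp))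
  have hE0 : 0 ≤ E₀ := le_trans (abs_nonneg _) hE'
  have h1 : 1 - ⟪x, z⟫_ℝ = ‖x - z‖^2/2 := hunit
  obtain ⟨hT1, hT2⟩ := abs_le.mp hT
  obtain ⟨he1, he2⟩ := abs_le.mp hE'
  constructor
  · rw [hkey]
    nlinarith [sq_nonneg ‖x - z‖]
  · rw [hkey]
    nlinarith [sq_nonneg ‖x - z‖]

lemma exists_net (hn : 2 ≤ n) {δ : ℝ} (hδ : 0 < δ) :
    ∃ Z : Finset (Eucl n), Z.Nonempty ∧ (∀ z ∈ Z, ‖z‖ = 1) ∧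
      ∀ x : Eucl n, ‖x‖ = 1 → ∃ z ∈ Z, ‖x - z‖ ≤ δ := by
  classical
  have hcomp : IsCompact (sphere (0 : Eucl n) 1) := isCompact_sphere 0 1
  have hcover : sphere (0 : Eucl n) 1 ⊆ ⋃ z ∈ sphere (0 : Eucl n) 1, Metric.ball z δ :=
    fun x hx => Set.mem_biUnion hx (Metric.mem_ball_self hδ)
  obtain ⟨b, hbsub, hbfin, hbcov⟩ := hcomp.elim_finite_subcover_image
    (fun z _ => Metric.isOpen_ball) hcover
  have hx₀ : ‖EuclideanSpace.single (⟨0, by omega⟩ : Fin n) (1:ℝ)‖ = 1 := by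
    simp [EuclideanSpace.norm_single]
  refine ⟨hbfin.toFinset, ?_, ?_, ?_⟩
  · obtain ⟨z, hz, -⟩ := Set.mem_iUnion₂.mp
      (hbcov (mem_sphere_zero_iff_norm.mpr hx₀))
    exact ⟨z, hbfin.mem_toFinset.mpr hz⟩
  · intro z hz
    exact mem_sphere_zero_iff_norm.mp (hbsub (hbfin.mem_toFinset.mp hz))
  · intro x hx
    obtain ⟨z, hz, hmem⟩ := Set.mem_iUnion₂.mp (hbcov (mem_sphere_zero_iff_norm.mpr hx))
    refine ⟨z, hbfin.mem_toFinset.mpr hz, ?_⟩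
    rw [← dist_eq_norm]
    exact (Metric.mem_ball.mp hmem).le

end PLApprox

namespace PLApprox

variable {n : ℕ}

lemma gradient_sub_norm (f g : Eucl n → ℝ) (x : Eucl n) :
    ‖gradient f x - gradient g x‖ = ‖fderiv ℝ f x - fderiv ℝ g x‖ := by
  show ‖(InnerProductSpace.toDual ℝ (Eucl n)).symm (fderiv ℝ f x)
    - (InnerProductSpace.toDual ℝ (Eucl n)).symm (fderiv ℝ g x)‖ = _
  rw [← LinearIsometryEquiv.map_sub, LinearIsometryEquiv.norm_map]

lemma aVec_zero (c : ℝ) (z : Eucl n) : aVec (fun _ : Eucl n => (0:ℝ)) c z = c • z := by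
  have hfd0 : fderiv ℝ (fun _ : Eucl n => (0:ℝ)) z = 0 := fderiv_const_apply 0
  have hg0 : gradient (fun _ : Eucl n => (0:ℝ)) z = 0 := by
    show (InnerProductSpace.toDual ℝ (Eucl n)).symm (fderiv ℝ (fun _ : Eucl n => (0:ℝ)) z) = 0
    rw [hfd0, map_zero]
  rw [aVec, hg0, hfd0]
  simp

lemma half_trick {a η : ℝ} (ha : 0 < a) (hη : 0 < η) : a * (η/(2*a+1)) ≤ η/2 := by
  rw [← mul_div_assoc, div_le_div_iff₀ (by linarith) (by norm_num)]
  nlinarith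

set_option maxHeartbeats 1000000 in
lemma level_approx (hn : 2 ≤ n) (u : Sph n → ℝ)
    (hu : ContDiffOn ℝ 1 (homExt u) {(0 : Eucl n)}ᶜ) {η : ℝ} (hη : 0 < η) :
    ∃ (f : Eucl n → ℝ) (U : Finset (Eucl n)), IsPiecewiseLinear f ∧
      (∀ t : ℝ, 0 ≤ t → ∀ x : Eucl n, f (t • x) = t * f x) ∧
      (∀ x : Eucl n, ‖x‖ = 1 → |f x - homExt u x| ≤ η) ∧
      (∀ x : Eucl n, ‖x‖ = 1 →
        (∀ v ∈ U, ∀ w ∈ U, ⟪x, v⟫_ℝ = ⟪x, w⟫_ℝ → v = w) →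
        ∃ g : Eucl n, HasGradientAt f g x ∧ ‖g - gradient (homExt u) x‖ ≤ η) := by
  classical
  have hFd : ∀ x : Eucl n, x ≠ 0 → DifferentiableAt ℝ (homExt u) x := fun x hx =>
    (hu.contDiffAt ((isOpen_compl_singleton).mem_nhds hx)).differentiableAt one_ne_zero
  -- smooth approximation
  obtain ⟨H, hH2, hHcl⟩ := exists_smooth_approx u hu (show (0:ℝ) < η/8 by positivity)
  have hD1 : ContDiff ℝ 1 (fderiv ℝ H) := hH2.fderiv_right (by norm_num)
  obtain ⟨M₀, hM₀⟩ := (isCompact_closedBall (0:Eucl n) 1).exists_bound_of_continuousOn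
    ((hD1.continuous_fderiv one_ne_zero).continuousOn (s := Metric.closedBall 0 1))
  obtain ⟨M, hM, hM0⟩ : ∃ M : ℝ,
      (∀ p ∈ Metric.closedBall (0:Eucl n) 1, ‖fderiv ℝ (fderiv ℝ H) p‖ ≤ M) ∧ 0 ≤ M :=
    ⟨max M₀ 0, fun p hp => le_trans (hM₀ p hp) (le_max_left _ _), le_max_right _ _⟩
  -- Euler defect bound
  have hE : ∀ z : Eucl n, ‖z‖ = 1 → |H z - fderiv ℝ H z z| ≤ η/4 := by
    intro z hz
    have hz0 : z ≠ 0 := by intro h; rw [h, norm_zero] at hz; norm_num at hz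
    have heuler : fderiv ℝ (homExt u) z z = homExt u z := (homog1_homExt u).euler (hFd z hz0)
    obtain ⟨hv, hd⟩ := hHcl z hz
    have happ : |fderiv ℝ H z z - fderiv ℝ (homExt u) z z| ≤ η/8 := by
      have h1 : fderiv ℝ H z z - fderiv ℝ (homExt u) z z
          = (fderiv ℝ H z - fderiv ℝ (homExt u) z) z := by
        simp [ContinuousLinearMap.sub_apply]
      rw [h1, ← Real.norm_eq_abs]
      calc ‖(fderiv ℝ H z - fderiv ℝ (homExt u) z) z‖
          ≤ ‖fderiv ℝ H z - fderiv ℝ (homExt u) z‖ * ‖z‖ := ContinuousLinearMap.le_opNorm _ z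
      _ ≤ η/8 := by rw [hz, mul_one]; exact hd
    have hsplit : H z - fderiv ℝ H z z
        = (H z - homExt u z) - (fderiv ℝ H z z - fderiv ℝ (homExt u) z z)
          + (homExt u z - fderiv ℝ (homExt u) z z) := by ring
    rw [hsplit, heuler, sub_self, add_zero]
    have h2 := abs_le.mp hv
    have h3 := abs_le.mp happ
    rw [abs_le]
    constructor <;> linarith
  set E₀ := η/4 with hE₀def
  set c := 4*M + 2*E₀ + 1 with hcdef
  have hc0 : 0 < c := by rw [hcdef, hE₀def]; linarith
  have hcle : 4*M + 2*E₀ ≤ c := by rw [hcdef]; linarith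
  set Kup := M + c/2 + E₀/2 with hKupdef
  have hKup0 : 0 < Kup := by rw [hKupdef, hE₀def]; linarith
  have hEc : ∀ z : Eucl n, ‖z‖ = 1 → |H z - fderiv ℝ H z z| ≤ E₀ := by
    rw [hE₀def]; exact hE
  -- bregman bounds in convenient form
  have hbreg : ∀ x z : Eucl n, ‖x‖ = 1 → ‖z‖ = 1 →
      (c/4) * ‖x - z‖^2 ≤ H x + c - ⟪x, aVec H c z⟫_ℝ ∧
      H x + c - ⟪x, aVec H c z⟫_ℝ ≤ Kup * ‖x - z‖^2 := by
    intro x z hx hz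
    have := bregman_bounds hH2 hM hEc hcle hx hz
    rw [hKupdef]
    exact this
  -- the zero function data (for the second max)
  have hbreg0 : ∀ x z : Eucl n, ‖x‖ = 1 → ‖z‖ = 1 →
      (c/4) * ‖x - z‖^2 ≤ c - ⟪x, c • z⟫_ℝ ∧
      c - ⟪x, c • z⟫_ℝ ≤ (c/2) * ‖x - z‖^2 := by
    intro x z hx hz
    have hfd0 : ∀ p : Eucl n, fderiv ℝ (fun _ : Eucl n => (0:ℝ)) p = 0 :=
      fun p => fderiv_const_apply 0
    have hM0' : ∀ p ∈ Metric.closedBall (0:Eucl n) 1,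
        ‖fderiv ℝ (fderiv ℝ (fun _ : Eucl n => (0:ℝ))) p‖ ≤ 0 := by
      intro p _
      have h00 : fderiv ℝ (fun _ : Eucl n => (0:ℝ)) = fun _ => 0 := funext hfd0
      rw [h00, fderiv_const_apply]; exact (norm_zero (E := Eucl n →L[ℝ] Eucl n →L[ℝ] ℝ)).le
    have hE0' : ∀ z : Eucl n, ‖z‖ = 1 → |(fun _ : Eucl n => (0:ℝ)) z
        - fderiv ℝ (fun _ : Eucl n => (0:ℝ)) z z| ≤ 0 := by
      intro z _
      rw [hfd0 z]
      simp
    have h := bregman_bounds contDiff_const hM0' hE0' (c := c) (by linarith) hx hz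
    rw [aVec_zero] at h
    constructor
    · have := h.1
      nlinarith [this]
    · have := h.2
      nlinarith [this]
  -- continuity modulus for gradient H on the sphere
  have hGcont : Continuous (fun z : Eucl n => gradient H z) := by
    show Continuous (fun z : Eucl n =>
      (InnerProductSpace.toDual ℝ (Eucl n)).symm (fderiv ℝ H z))
    exact (InnerProductSpace.toDual ℝ (Eucl n)).symm.continuous.comp hD1.continuous
  obtain ⟨r₁, hr₁, hmodG⟩ := Metric.uniformContinuousOn_iff.mp
    ((isCompact_sphere (0:Eucl n) 1).uniformContinuousOn_of_continuous
      hGcont.continuousOn) (η/8) (by positivity)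
  clear_value E₀ c Kup
  -- choice of δ
  set Q := 1 + 4*Kup/c with hQdef
  have hQ1 : 1 ≤ Q := by
    rw [hQdef]
    have : 0 ≤ 4*Kup/c := by positivity
    linarith
  have hQ0 : 0 < Q := lt_of_lt_of_le one_pos hQ1
  have hQc : (Q - 1) * c = 4 * Kup := by
    rw [hQdef]
    field_simp
    ring
  clear_value Q
  clear hQdef
  obtain ⟨δ, hδ0, hδ1, hδr, hδv, hδg⟩ : ∃ δ : ℝ, 0 < δ ∧ δ ≤ 1 ∧ δ ≤ r₁/(2*Q) ∧
      δ ≤ η/(2*(Kup + c/2)+1) ∧ δ ≤ η/(2*(c*(Q+3))+1) := by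
    refine ⟨min (min 1 (r₁/(2*Q))) (min (η/(2*(Kup + c/2)+1)) (η/(2*(c*(Q+3))+1))),
      ?_, ?_, ?_, ?_, ?_⟩
    · apply lt_min (lt_min one_pos (by positivity)) (lt_min (by positivity) (by positivity))
    · exact le_trans (min_le_left _ _) (min_le_left _ _)
    · exact le_trans (min_le_left _ _) (min_le_right _ _)
    · exact le_trans (min_le_right _ _) (min_le_left _ _)
    · exact le_trans (min_le_right _ _) (min_le_right _ _)
  -- net
  obtain ⟨Z, hZne, hZunit, hZnet⟩ := exists_net hn hδ0
  have hAne : (Z.image (aVec H c)).Nonempty := hZne.image _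
  have hBne : (Z.image (fun z : Eucl n => c • z)).Nonempty := hZne.image _
  -- bounds for the two max functions on the sphere
  have hPUB : ∀ x : Eucl n, ‖x‖ = 1 → maxLin _ hAne x ≤ H x + c := by
    intro x hx
    apply maxLin_le
    intro v hv
    obtain ⟨z, hz, hzv⟩ := Finset.mem_image.mp hv
    rw [← hzv]
    have h := (hbreg x z hx (hZunit z hz)).1
    nlinarith [sq_nonneg ‖x - z‖]
  have hPLB : ∀ x : Eucl n, ‖x‖ = 1 → H x + c - Kup * δ^2 ≤ maxLin _ hAne x := by
    intro x hx
    obtain ⟨z₀, hz₀, hz₀near⟩ := hZnet x hx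
    have hb := (hbreg x z₀ hx (hZunit z₀ hz₀)).2
    have hsq : ‖x - z₀‖^2 ≤ δ^2 := by
      apply pow_le_pow_left₀ (norm_nonneg _) hz₀near
    have h2 : ⟪x, aVec H c z₀⟫_ℝ ≤ maxLin _ hAne x :=
      le_maxLin hAne (Finset.mem_image_of_mem _ hz₀)
    nlinarith
  have hQUB : ∀ x : Eucl n, ‖x‖ = 1 → maxLin _ hBne x ≤ c := by
    intro x hx
    apply maxLin_le
    intro v hv
    obtain ⟨z, hz, hzv⟩ := Finset.mem_image.mp hv
    rw [← hzv]
    have h := (hbreg0 x z hx (hZunit z hz)).1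
    nlinarith [sq_nonneg ‖x - z‖]
  have hQLB : ∀ x : Eucl n, ‖x‖ = 1 → c - (c/2) * δ^2 ≤ maxLin _ hBne x := by
    intro x hx
    obtain ⟨z₀, hz₀, hz₀near⟩ := hZnet x hx
    have hb := (hbreg0 x z₀ hx (hZunit z₀ hz₀)).2
    have hsq : ‖x - z₀‖^2 ≤ δ^2 := pow_le_pow_left₀ (norm_nonneg _) hz₀near 2
    have h2 : ⟪x, c • z₀⟫_ℝ ≤ maxLin _ hBne x :=
      le_maxLin hBne (Finset.mem_image_of_mem _ hz₀)
    nlinarith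
  refine ⟨fun x => maxLin _ hAne x - maxLin _ hBne x, Z.image (aVec H c) ∪ Z.image (fun z : Eucl n => c • z),
    isPiecewiseLinear_maxLin_sub _ _ hAne hBne, ?_, ?_, ?_⟩
  · intro t ht x
    show maxLin _ hAne (t • x) - maxLin _ hBne (t • x)
      = t * (maxLin _ hAne x - maxLin _ hBne x)
    rw [maxLin_smul _ hAne ht, maxLin_smul _ hBne ht]
    ring
  · -- value estimate
    intro x hx
    show |(maxLin _ hAne x - maxLin _ hBne x) - homExt u x| ≤ η
    have hclose : |H x - homExt u x| ≤ η/8 := (hHcl x hx).1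
    have hf1 : |(maxLin _ hAne x - maxLin _ hBne x) - H x| ≤ (Kup + c/2) * δ^2 := by
      have h1 := hPUB x hx
      have h2 := hPLB x hx
      have h3 := hQUB x hx
      have h4 := hQLB x hx
      rw [abs_le]
      constructor <;> nlinarith
    have hδsq : (Kup + c/2) * δ^2 ≤ η/2 := by
      have h1 : δ^2 ≤ δ := by nlinarith
      have h2 : (Kup + c/2) * δ ≤ (Kup + c/2) * (η/(2*(Kup + c/2)+1)) := by
        apply mul_le_mul_of_nonneg_left hδv
        linarith
      have h3 : (Kup + c/2) * (η/(2*(Kup + c/2)+1)) ≤ η/2 :=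
        half_trick (by linarith) hη
      nlinarith
    have habs : |(maxLin _ hAne x - maxLin _ hBne x) - homExt u x|
        ≤ |(maxLin _ hAne x - maxLin _ hBne x) - H x| + |H x - homExt u x| := by
      have hsplit : (maxLin _ hAne x - maxLin _ hBne x) - homExt u x
          = ((maxLin _ hAne x - maxLin _ hBne x) - H x) + (H x - homExt u x) := by ring
      rw [hsplit]
      exact abs_add_le _ _
    linarith
  · -- gradient estimate
    intro x hx hgood
    obtain ⟨v, hvA, hveq, hvmax⟩ := exists_maxLin _ hAne x
    obtain ⟨w, hwB, hweq, hwmax⟩ := exists_maxLin _ hBne x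
    have hstricv : ∀ v' ∈ Z.image (aVec H c), v' ≠ v → ⟪x, v'⟫_ℝ < ⟪x, v⟫_ℝ := by
      intro v' hv' hne
      rcases lt_or_eq_of_le (hvmax v' hv') with h | h
      · exact h
      · exact absurd (hgood v' (Finset.mem_union_left _ hv') v (Finset.mem_union_left _ hvA) h)
          hne
    have hstricw : ∀ w' ∈ Z.image (fun z : Eucl n => c • z), w' ≠ w →
        ⟪x, w'⟫_ℝ < ⟪x, w⟫_ℝ := by
      intro w' hw' hne
      rcases lt_or_eq_of_le (hwmax w' hw') with h | h
      · exact h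
      · exact absurd (hgood w' (Finset.mem_union_right _ hw') w (Finset.mem_union_right _ hwB) h)
          hne
    have hGrad : HasGradientAt (fun y => maxLin _ hAne y - maxLin _ hBne y) (v - w) x :=
      maxLin_sub_hasGradientAt hvA hwB hstricv hstricw
    refine ⟨v - w, hGrad, ?_⟩
    obtain ⟨zs, hzs, hvz⟩ := Finset.mem_image.mp hvA
    obtain ⟨ws, hws, hwz⟩ := Finset.mem_image.mp hwB
    have hzs1 : ‖zs‖ = 1 := hZunit zs hzs
    have hws1 : ‖ws‖ = 1 := hZunit ws hws
    -- localization of the maximizers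
    have hlocv : ‖x - zs‖ ≤ Q * δ := by
      have hb := (hbreg x zs hx hzs1).1
      rw [hvz] at hb
      have hDv : H x + c - ⟪x, v⟫_ℝ ≤ Kup * δ^2 := by
        have h := hPLB x hx
        rw [hveq] at h
        linarith
      have ha2 : ‖x - zs‖^2 * c ≤ 4 * Kup * δ^2 := by nlinarith
      have hEq : ((Q-1)*c)*δ^2 = (4*Kup)*δ^2 := by rw [hQc]
      have ha3 : ‖x - zs‖^2 ≤ (Q-1)*δ^2 := by
        have h' : ‖x - zs‖^2 * c ≤ ((Q-1)*δ^2)*c := by linarith [hEq, ha2]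
        exact le_of_mul_le_mul_right h' hc0
      nlinarith [norm_nonneg (x - zs), sq_nonneg (‖x - zs‖ - Q*δ), sq_nonneg (Q - 2⁻¹),
        pow_pos hδ0 2, mul_pos hQ0 hδ0, mul_nonneg hQ0.le hδ0.le]
    have hlocw : ‖x - ws‖ ≤ 2 * δ := by
      have hb := (hbreg0 x ws hx hws1).1
      rw [hwz] at hb
      have hDw : c - ⟪x, w⟫_ℝ ≤ (c/2) * δ^2 := by
        have h := hQLB x hx
        rw [hweq] at h
        linarith
      have ha3 : ‖x - ws‖^2 ≤ 2*δ^2 := by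
        have h' : ‖x - ws‖^2 * (c/4) ≤ (2*δ^2) * (c/4) := by nlinarith
        exact le_of_mul_le_mul_right h' (by linarith)
      nlinarith [norm_nonneg (x - ws), sq_nonneg (‖x - ws‖ - 2*δ), pow_pos hδ0 2, hδ0.le]
    -- decomposition of the error
    have hdecomp : v - w - gradient (homExt u) x
        = (gradient H zs - gradient H x) + (gradient H x - gradient (homExt u) x)
          + (H zs - fderiv ℝ H zs zs) • zs + c • (zs - ws) := by
      rw [← hvz, ← hwz, aVec]
      module
    have hb1 : ‖gradient H zs - gradient H x‖ ≤ η/8 := by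
      have hdist : dist zs x < r₁ := by
        rw [dist_eq_norm, norm_sub_rev]
        calc ‖x - zs‖ ≤ Q * δ := hlocv
        _ ≤ Q * (r₁/(2*Q)) := mul_le_mul_of_nonneg_left hδr hQ0.le
        _ = r₁/2 := by field_simp
        _ < r₁ := by linarith
      have := hmodG zs (mem_sphere_zero_iff_norm.mpr hzs1) x (mem_sphere_zero_iff_norm.mpr hx)
        hdist
      rw [dist_eq_norm] at this
      exact this.le
    have hb2 : ‖gradient H x - gradient (homExt u) x‖ ≤ η/8 := by
      rw [gradient_sub_norm]
      exact (hHcl x hx).2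
    have hb3 : ‖(H zs - fderiv ℝ H zs zs) • zs‖ ≤ η/4 := by
      rw [norm_smul, Real.norm_eq_abs, hzs1, mul_one]
      exact le_trans (hE zs hzs1) (le_of_eq hE₀def)
    have hb4 : ‖c • (zs - ws)‖ ≤ η/2 := by
      rw [norm_smul, Real.norm_eq_abs, abs_of_pos hc0]
      have h1 : ‖zs - ws‖ ≤ ‖x - zs‖ + ‖x - ws‖ := by
        calc ‖zs - ws‖ = ‖(zs - x) + (x - ws)‖ := by rw [sub_add_sub_cancel]
        _ ≤ ‖zs - x‖ + ‖x - ws‖ := norm_add_le _ _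
        _ = ‖x - zs‖ + ‖x - ws‖ := by rw [norm_sub_rev]
      have h2 : ‖zs - ws‖ ≤ (Q + 3) * δ := by nlinarith
      have h3 : c * ((Q+3) * δ) ≤ c * ((Q+3) * (η/(2*(c*(Q+3))+1))) := by
        apply mul_le_mul_of_nonneg_left _ hc0.le
        apply mul_le_mul_of_nonneg_left hδg
        linarith
      have h4 : c * ((Q+3) * (η/(2*(c*(Q+3))+1))) ≤ η/2 := by
        have := half_trick (a := c*(Q+3)) (by nlinarith) hη
        calc c * ((Q+3) * (η/(2*(c*(Q+3))+1))) = (c*(Q+3)) * (η/(2*(c*(Q+3))+1)) := by ring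
        _ ≤ η/2 := this
      calc c * ‖zs - ws‖ ≤ c * ((Q+3) * δ) := by nlinarith
      _ ≤ η/2 := le_trans h3 h4
    calc ‖v - w - gradient (homExt u) x‖
        = ‖(gradient H zs - gradient H x) + (gradient H x - gradient (homExt u) x)
          + (H zs - fderiv ℝ H zs zs) • zs + c • (zs - ws)‖ := by rw [hdecomp]
    _ ≤ ‖(gradient H zs - gradient H x) + (gradient H x - gradient (homExt u) x)
          + (H zs - fderiv ℝ H zs zs) • zs‖ + ‖c • (zs - ws)‖ := norm_add_le _ _
    _ ≤ ‖(gradient H zs - gradient H x) + (gradient H x - gradient (homExt u) x)‖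
          + ‖(H zs - fderiv ℝ H zs zs) • zs‖ + ‖c • (zs - ws)‖ := by
        have := norm_add_le ((gradient H zs - gradient H x)
          + (gradient H x - gradient (homExt u) x)) ((H zs - fderiv ℝ H zs zs) • zs)
        linarith
    _ ≤ ‖gradient H zs - gradient H x‖ + ‖gradient H x - gradient (homExt u) x‖
          + ‖(H zs - fderiv ℝ H zs zs) • zs‖ + ‖c • (zs - ws)‖ := by
        have := norm_add_le (gradient H zs - gradient H x)
          (gradient H x - gradient (homExt u) x)
        linarith
    _ ≤ η/8 + η/8 + η/4 + η/2 := by linarith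
    _ ≤ η := by linarith

end PLApprox


/-- Every `C¹` function on the sphere (i.e. whose 1-homogeneous extension is
`C¹` away from the origin) is the τ-limit of a sequence of restrictions of
piecewise linear functions. -/
theorem approximation_of_C1_functions (n : ℕ) (hn : 2 ≤ n) (u : Sph n → ℝ)
    (hu : ContDiffOn ℝ 1 (homExt u) {(0 : Eucl n)}ᶜ) :
    ∃ f : ℕ → Eucl n → ℝ, (∀ i, IsPiecewiseLinear (f i)) ∧
      TauTendsto (fun i (x : Sph n) => f i (x : Eucl n)) u := by
  classical
  have hsphere_sub : (sphere (0 : Eucl n) 1 : Set (Eucl n)) ⊆ {(0 : Eucl n)}ᶜ := by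
    intro x hx
    simp only [Set.mem_compl_iff, Set.mem_singleton_iff]
    intro h
    rw [mem_sphere_zero_iff_norm, h, norm_zero] at hx
    norm_num at hx
  -- choose the approximating piecewise linear functions
  have hlevel : ∀ j : ℕ, ∃ (f : Eucl n → ℝ) (U : Finset (Eucl n)), IsPiecewiseLinear f ∧
      (∀ t : ℝ, 0 ≤ t → ∀ x : Eucl n, f (t • x) = t * f x) ∧
      (∀ x : Eucl n, ‖x‖ = 1 → |f x - homExt u x| ≤ 1/(j+1)) ∧
      (∀ x : Eucl n, ‖x‖ = 1 →
        (∀ v ∈ U, ∀ w ∈ U, ⟪x, v⟫_ℝ = ⟪x, w⟫_ℝ → v = w) →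
        ∃ g : Eucl n, HasGradientAt f g x ∧ ‖g - gradient (homExt u) x‖ ≤ 1/(j+1)) :=
    fun j => PLApprox.level_approx hn u hu (by positivity)
  choose f U hPL hhom hval hgrad using hlevel
  -- basic consequences
  have hhomext : ∀ j : ℕ, homExt (fun x : Sph n => f j (x : Eucl n)) = f j :=
    fun j => PLApprox.homExt_eq_of_homog (fun t ht x => hhom j t ht x)
  have hvalS : ∀ (j : ℕ) (x : Sph n), |f j (x : Eucl n) - u x| ≤ 1/(j+1) := by
    intro j x
    have := hval j (x : Eucl n) (PLApprox.sph_norm x)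
    rwa [PLApprox.homExt_coe u x] at this
  -- uniform bound on the limit gradient and function
  obtain ⟨B₀, hB₀⟩ := (isCompact_sphere (0:Eucl n) 1).exists_bound_of_continuousOn
    (f := fun x => gradient (homExt u) x) (by
      show ContinuousOn (fun x => (InnerProductSpace.toDual ℝ (Eucl n)).symm
        (fderiv ℝ (homExt u) x)) (sphere (0:Eucl n) 1)
      apply Continuous.comp_continuousOn
        (InnerProductSpace.toDual ℝ (Eucl n)).symm.continuous
      exact (hu.continuousOn_fderiv_of_isOpen isOpen_compl_singleton le_rfl).mono hsphere_sub)
  obtain ⟨Bu, hBu⟩ := (isCompact_sphere (0:Eucl n) 1).exists_bound_of_continuousOn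
    (f := homExt u) ((hu.continuousOn).mono hsphere_sub)
  -- the exceptional null set
  set bad : ℕ → Set (Sph n) := fun j => {x : Sph n |
    ¬ (∀ v ∈ U j, ∀ w ∈ U j, ⟪(x : Eucl n), v⟫_ℝ = ⟪(x : Eucl n), w⟫_ℝ → v = w)} with hbad
  have hbadnull : ∀ j, sphMeasure n (bad j) = 0 := by
    intro j
    have hsub2 : bad j ⊆ ⋃ p ∈ ((U j ×ˢ U j).filter
        (fun p : Eucl n × Eucl n => p.1 ≠ p.2) : Finset (Eucl n × Eucl n)),
        {x : Sph n | ⟪(x : Eucl n), p.1 - p.2⟫_ℝ = 0} := by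
      intro x hx
      rw [hbad, Set.mem_setOf_eq] at hx
      push_neg at hx
      obtain ⟨v, hv, w, hw, heq, hne⟩ := hx
      have hpmem : ((v, w) : Eucl n × Eucl n) ∈ ((U j ×ˢ U j).filter
          (fun p : Eucl n × Eucl n => p.1 ≠ p.2)) :=
        Finset.mem_filter.mpr ⟨Finset.mem_product.mpr ⟨hv, hw⟩, hne⟩
      refine Set.mem_iUnion₂.mpr ⟨(v, w), hpmem, ?_⟩
      rw [Set.mem_setOf_eq, inner_sub_right, sub_eq_zero]
      exact heq
    have hnull2 : sphMeasure n (⋃ p ∈ ((U j ×ˢ U j).filter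
        (fun p : Eucl n × Eucl n => p.1 ≠ p.2) : Finset (Eucl n × Eucl n)),
        {x : Sph n | ⟪(x : Eucl n), p.1 - p.2⟫_ℝ = 0}) = 0 := by
      rw [← Finset.set_biUnion_coe, measure_biUnion_null_iff (Finset.countable_toSet _)]
      intro p hp
      rw [Finset.mem_coe] at hp
      have hne : p.1 - p.2 ≠ 0 := sub_ne_zero.mpr (Finset.mem_filter.mp hp).2
      exact PLApprox.sphMeasure_hyperplane_null hn hne
    exact measure_mono_null hsub2 hnull2
  have htotalnull : sphMeasure n (⋃ j, bad j) = 0 := measure_iUnion_null hbadnull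
  -- gradient control off the bad sets
  have hkey : ∀ (j : ℕ) (x : Sph n), x ∉ bad j →
      ‖sphGrad (fun y : Sph n => f j (y : Eucl n)) x - sphGrad u x‖ ≤ 2/(j+1) := by
    intro j x hx
    rw [hbad, Set.mem_setOf_eq, not_not] at hx
    obtain ⟨g, hg, hgb⟩ := hgrad j (x : Eucl n) (PLApprox.sph_norm x) hx
    have hgrad_eq : gradient (homExt (fun y : Sph n => f j (y : Eucl n))) (x : Eucl n) = g := by
      rw [hhomext j]
      exact hg.gradient
    have hdecomp : sphGrad (fun y : Sph n => f j (y : Eucl n)) x - sphGrad u x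
        = (g - gradient (homExt u) (x : Eucl n))
          - (f j (x : Eucl n) - u x) • (x : Eucl n) := by
      simp only [sphGrad, hgrad_eq, sub_smul]
      abel
    rw [hdecomp]
    have h2 : ‖(f j (x : Eucl n) - u x) • (x : Eucl n)‖ ≤ 1/(j+1) := by
      rw [norm_smul, Real.norm_eq_abs, PLApprox.sph_norm x, mul_one]
      exact hvalS j x
    calc ‖(g - gradient (homExt u) (x : Eucl n))
          - (f j (x : Eucl n) - u x) • (x : Eucl n)‖
        ≤ ‖g - gradient (homExt u) (x : Eucl n)‖
          + ‖(f j (x : Eucl n) - u x) • (x : Eucl n)‖ := norm_sub_le _ _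
    _ ≤ 1/(j+1) + 1/(j+1) := add_le_add hgb h2
    _ = 2/(j+1) := by ring
  have hseq : Tendsto (fun j : ℕ => 2/((j:ℝ)+1)) atTop (𝓝 0) := by
    have := tendsto_one_div_add_atTop_nhds_zero_nat (𝕜 := ℝ)
    have h2 := this.const_mul (2:ℝ)
    simpa [mul_one_div, div_eq_mul_inv] using h2
  refine ⟨f, hPL, ?_, ?_, ?_⟩
  · -- uniform convergence
    rw [Metric.tendstoUniformly_iff]
    intro ε hε
    obtain ⟨N, hN⟩ := exists_nat_one_div_lt hε
    rw [eventually_atTop]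
    refine ⟨N, fun j hj x => ?_⟩
    have h1 : (1:ℝ)/(j+1) ≤ 1/(N+1) := by
      apply one_div_le_one_div_of_le (by positivity)
      have : (N:ℝ) ≤ (j:ℝ) := by exact_mod_cast hj
      linarith
    have := hvalS j x
    rw [Real.dist_eq, abs_sub_comm]
    calc |f j (x : Eucl n) - u x| ≤ 1/(j+1) := this
    _ ≤ 1/(N+1) := h1
    _ < ε := hN
  · -- a.e. convergence of spherical gradients
    rw [MeasureTheory.ae_iff]
    apply measure_mono_null _ htotalnull
    intro x hx
    simp only [Set.mem_setOf_eq] at hx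
    by_contra hxmem
    apply hx
    rw [tendsto_iff_norm_sub_tendsto_zero]
    apply squeeze_zero (fun j => norm_nonneg _) _ hseq
    intro j
    apply hkey j x
    intro hmem
    exact hxmem (Set.mem_iUnion.mpr ⟨j, hmem⟩)
  · -- uniform a.e. bound of the gradients
    refine ⟨max B₀ 0 + max Bu 0 + 3, by positivity, ?_⟩
    intro j
    rw [MeasureTheory.ae_iff]
    apply measure_mono_null _ (hbadnull j)
    intro x hx
    simp only [Set.mem_setOf_eq] at hx
    by_contra hxmem
    apply hx
    have hb := hkey j x hxmem
    have hsx : (x : Eucl n) ∈ sphere (0:Eucl n) 1 := x.2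
    have hsphu : ‖sphGrad u x‖ ≤ max B₀ 0 + max Bu 0 := by
      simp only [sphGrad]
      calc ‖gradient (homExt u) (x : Eucl n) - u x • (x : Eucl n)‖
          ≤ ‖gradient (homExt u) (x : Eucl n)‖ + ‖u x • (x : Eucl n)‖ := norm_sub_le _ _
      _ ≤ max B₀ 0 + max Bu 0 := by
          apply add_le_add (le_trans (hB₀ _ hsx) (le_max_left _ _))
          rw [norm_smul, Real.norm_eq_abs, PLApprox.sph_norm x, mul_one]
          have : |u x| = ‖homExt u (x : Eucl n)‖ := by
            rw [PLApprox.homExt_coe u x, Real.norm_eq_abs]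
          rw [this]
          exact le_trans (hBu _ hsx) (le_max_left _ _)
    have h2j : (2:ℝ)/(j+1) ≤ 2 := by
      rw [div_le_iff₀ (by positivity)]
      have : (0:ℝ) ≤ (j:ℝ) := Nat.cast_nonneg j
      linarith
    calc ‖sphGrad (fun y : Sph n => f j (y : Eucl n)) x‖
        ≤ ‖sphGrad (fun y : Sph n => f j (y : Eucl n)) x - sphGrad u x‖ + ‖sphGrad u x‖ := by
          have := norm_add_le (sphGrad (fun y : Sph n => f j (y : Eucl n)) x - sphGrad u x)
            (sphGrad u x)
          simpa using this
    _ ≤ 2/(j+1) + (max B₀ 0 + max Bu 0) := add_le_add hb hsphu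
    _ ≤ max B₀ 0 + max Bu 0 + 3 := by linarith
end
end

section
/- Let N ∈ ℕ with N ≥ 2. For every ν ∈ ℕ there exist N_ν = ν^{N−1} points x₁, …, x_{N_ν} on the unit sphere S^{N−1} ⊆ ℝ^N such that ‖x_i − x_j‖ ≥ 1/(√N · ν) for all i ≠ j. -/
lemma abs_coord_le_norm {m : ℕ} (y : EuclideanSpace ℝ (Fin m)) (i : Fin m) :
    |y i| ≤ ‖y‖ := by
  rw [EuclideanSpace.norm_eq, ← Real.sqrt_sq_eq_abs]
  apply Real.sqrt_le_sqrt
  have := Finset.single_le_sum (f := fun k => ‖y k‖ ^ 2)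
    (fun k _ => by positivity) (Finset.mem_univ i)
  simpa [Real.norm_eq_abs, sq_abs] using this

/-- For every `N ≥ 2` and every `ν ∈ ℕ` there are `ν^{N-1}` points on the unit
sphere `S^{N-1} ⊆ ℝ^N` with pairwise distances at least `1/(√N · ν)`. -/
theorem separated_points_on_sphere (N : ℕ) (hN : 2 ≤ N) (ν : ℕ) :
    ∃ x : Fin (ν ^ (N - 1)) → EuclideanSpace ℝ (Fin N),
      (∀ a, ‖x a‖ = 1) ∧
      ∀ a b, a ≠ b → 1 / (Real.sqrt N * ν) ≤ ‖x a - x b‖ := by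
  obtain ⟨n, rfl⟩ : ∃ n, N = n + 1 := ⟨N - 1, by omega⟩
  rcases Nat.eq_zero_or_pos ν with rfl | hν
  · have h : (0 : ℕ) ^ n = 0 := Nat.zero_pow (by omega)
    exact ⟨fun a => Fin.elim0 (Fin.cast h a),
      fun a => Fin.elim0 (Fin.cast h a),
      fun a b _ => Fin.elim0 (Fin.cast h a)⟩
  set c : ℝ := Real.sqrt (n + 1 : ℕ) * ν with hc
  have hc0 : 0 < c := mul_pos (Real.sqrt_pos.mpr (by positivity)) (by exact_mod_cast hν)
  have hc2 : c ^ 2 = (n + 1 : ℕ) * (ν : ℝ) ^ 2 := by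
    rw [hc, mul_pow, Real.sq_sqrt (by positivity)]
  set f : Fin (ν ^ n) → Fin n → Fin ν := fun a => finFunctionFinEquiv.symm a with hf
  set S : Fin (ν ^ n) → ℝ := fun a => ∑ j, ((f a j : ℝ) / c) ^ 2 with hS
  have hterm : ∀ a (j : Fin n), ((f a j : ℝ) / c) ^ 2 ≤ 1 / (n + 1 : ℕ) := by
    intro a j
    rw [div_pow, hc2, div_le_div_iff₀ (by positivity) (by positivity)]
    have h1 : (f a j : ℝ) ≤ ν := by exact_mod_cast (f a j).2.le
    have h0 : (0 : ℝ) ≤ (f a j : ℝ) := by positivity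
    have h2 : (f a j : ℝ) ^ 2 ≤ (ν : ℝ) ^ 2 := by nlinarith
    have hp : (0 : ℝ) ≤ ((n + 1 : ℕ) : ℝ) := Nat.cast_nonneg _
    nlinarith [mul_le_mul_of_nonneg_right h2 hp]
  have hSle : ∀ a, S a ≤ 1 := by
    intro a
    have : S a ≤ ∑ _j : Fin n, (1 / (n + 1 : ℕ) : ℝ) :=
      Finset.sum_le_sum fun j _ => hterm a j
    calc S a ≤ ∑ _j : Fin n, (1 / (n + 1 : ℕ) : ℝ) := this
      _ = n * (1 / (n + 1 : ℕ) : ℝ) := by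
          simp [Finset.sum_const, nsmul_eq_mul]
      _ ≤ 1 := by
          rw [mul_one_div, div_le_one (by positivity)]
          push_cast; linarith
  set x : Fin (ν ^ n) → EuclideanSpace ℝ (Fin (n + 1)) :=
    fun a => WithLp.toLp 2 (Fin.snoc (fun j => (f a j : ℝ) / c) (Real.sqrt (1 - S a)) :
      Fin (n + 1) → ℝ) with hx
  refine ⟨x, ?_, ?_⟩
  · intro a
    rw [EuclideanSpace.norm_eq]
    have hsum : ∑ i, ‖x a i‖ ^ 2 = 1 := by
      rw [Fin.sum_univ_castSucc]
      simp only [hx, PiLp.toLp_apply, Fin.snoc_castSucc, Fin.snoc_last, Real.norm_eq_abs, sq_abs]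
      rw [Real.sq_sqrt (by linarith [hSle a])]
      simp only [hS]
      ring
    rw [hsum, Real.sqrt_one]
  · intro a b hab
    obtain ⟨j, hj⟩ : ∃ j, f a j ≠ f b j := by
      by_contra h
      push_neg at h
      exact hab (finFunctionFinEquiv.symm.injective (funext h))
    have h1 : (1 : ℝ) ≤ |(f a j : ℝ) - (f b j : ℝ)| := by
      have hne : ((f a j : ℕ) : ℤ) ≠ ((f b j : ℕ) : ℤ) := by
        exact_mod_cast fun h => hj (Fin.val_injective h)
      have : (1 : ℤ) ≤ |((f a j : ℕ) : ℤ) - ((f b j : ℕ) : ℤ)| :=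
        Int.one_le_abs (sub_ne_zero.mpr hne)
      exact_mod_cast this
    have key : 1 / c ≤ |(x a - x b) (Fin.castSucc j)| := by
      have happ : (x a - x b) (Fin.castSucc j) = ((f a j : ℝ) - (f b j : ℝ)) / c := by
        simp [hx, PiLp.sub_apply, Fin.snoc_castSucc, sub_div]
      rw [happ, abs_div, abs_of_pos hc0]
      gcongr
    exact key.trans (abs_coord_le_norm _ _)
end
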